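/- arXiv:2308.02965 — 4 statements merged into one kernel-verified Lean document; each statement's English description precedes it below -/
import Mathlib

section
/- Let η₀ > 0 and let f = f₀ + f₁e₁ + f₂e₂ : Ω_{η₀} → 𝒜 be a continuously differentiable monogenic constant. Then: (i) f₀ is constant on Ω_{η₀}; (ii) ∂₀f₁ = ∂₀f₂ = 0 on Ω_{η₀}; and (iii) there exists a holomorphic function F on the annulus A(η₀) = {z ∈ ℂ : sinh η₀/(cosh η₀+1) < |z| < sinh η₀/(cosh η₀−1)} such that f₁(x) − i f₂(x) = F(x₁ + i x₂) for all x ∈ Ω_{η₀}. -/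
open MeasureTheory Filter Quaternion

noncomputable section

namespace Toro

/-- Points of ℝ³. -/
notation "ℝ³" => (Fin 3 → ℝ)

/-- The quaternion unit e₁. -/
def e1 : ℍ[ℝ] := ⟨0, 1, 0, 0⟩
/-- The quaternion unit e₂. -/
def e2 : ℍ[ℝ] := ⟨0, 0, 1, 0⟩
/-- The quaternion unit e₃. -/
def e3 : ℍ[ℝ] := ⟨0, 0, 0, 1⟩

/-- Partial derivative ∂ᵢ via the Fréchet derivative. -/
def pdf {E : Type*} [NormedAddCommGroup E] [NormedSpace ℝ E]
    (i : Fin 3) (f : ℝ³ → E) (x : ℝ³) : E :=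
  fderiv ℝ f x (Pi.single i 1)

/-- `HasPartialAt i h x v` : `h` has `i`-th partial derivative `v` at `x`. -/
def HasPartialAt (i : Fin 3) (h : ℝ³ → ℝ) (x : ℝ³) (v : ℝ) : Prop :=
  HasDerivAt (fun t => h (Function.update x i t)) v (x i)

/-- The generalized Cauchy-Riemann (Fueter) operator ∂̄f = ∂₀f + e₁∂₁f + e₂∂₂f. -/
def CRbar (f : ℝ³ → ℍ[ℝ]) (x : ℝ³) : ℍ[ℝ] :=
  pdf 0 f x + e1 * pdf 1 f x + e2 * pdf 2 f x

/-- The conjugate Cauchy-Riemann operator ∂f = ∂₀f − e₁∂₁f − e₂∂₂f. -/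
def CRconj (f : ℝ³ → ℍ[ℝ]) (x : ℝ³) : ℍ[ℝ] :=
  pdf 0 f x - e1 * pdf 1 f x - e2 * pdf 2 f x

/-- ∂h = ∂₀h − ∂₁h e₁ − ∂₂h e₂ for a real-valued h. -/
def gradQ (h : ℝ³ → ℝ) (x : ℝ³) : ℍ[ℝ] :=
  ⟨pdf 0 h x, -(pdf 1 h x), -(pdf 2 h x), 0⟩

/-- The point of ℝ³ with toroidal coordinates (η, θ, φ). -/
def torusCoords (η θ φ : ℝ) : ℝ³ :=
  ![Real.sin θ / (Real.cosh η - Real.cos θ),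
    Real.sinh η * Real.cos φ / (Real.cosh η - Real.cos θ),
    Real.sinh η * Real.sin φ / (Real.cosh η - Real.cos θ)]

/-- The solid torus Ω_{η₀} : points with toroidal coordinate η > η₀, together with
the core circle {x₀ = 0, x₁² + x₂² = 1}. -/
def torusDomain (η₀ : ℝ) : Set ℝ³ :=
  {x | ∃ η θ φ : ℝ, η₀ < η ∧ x = torusCoords η θ φ} ∪
    {x | x 0 = 0 ∧ (x 1) ^ 2 + (x 2) ^ 2 = 1}

/-- The set V = {x : x₁² + x₂² > 0} ∖ {x₀ = 0, x₁² + x₂² = 1}. -/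
def Vset : Set ℝ³ :=
  {x | 0 < (x 1) ^ 2 + (x 2) ^ 2} \ {x | x 0 = 0 ∧ (x 1) ^ 2 + (x 2) ^ 2 = 1}

/-- ρ = √(x₁² + x₂²). -/
def rhoOf (x : ℝ³) : ℝ := Real.sqrt ((x 1) ^ 2 + (x 2) ^ 2)

/-- Square of the distance from (ρ, x₀) to (−1, 0) in the meridian half-plane. -/
def d1sq (x : ℝ³) : ℝ := (rhoOf x + 1) ^ 2 + (x 0) ^ 2
/-- Square of the distance from (ρ, x₀) to (1, 0) in the meridian half-plane. -/
def d2sq (x : ℝ³) : ℝ := (rhoOf x - 1) ^ 2 + (x 0) ^ 2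

/-- cosh η, where η is the toroidal coordinate of x. -/
def coshEta (x : ℝ³) : ℝ :=
  (d1sq x + d2sq x) / (2 * Real.sqrt (d1sq x) * Real.sqrt (d2sq x))

/-- The toroidal coordinate θ ∈ [−π, π] of x (sign matching the sign of x₀). -/
def thetaOf (x : ℝ³) : ℝ :=
  (if x 0 < 0 then -1 else 1) *
    Real.arccos ((d1sq x + d2sq x - 4) / (2 * Real.sqrt (d1sq x) * Real.sqrt (d2sq x)))

/-- The toroidal coordinate φ ∈ (−π, π] of x. -/
def phiOf (x : ℝ³) : ℝ := Complex.arg ⟨x 1, x 2⟩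

/-- Φ_k^+(α) = cos kα (sign `true`), Φ_k^−(α) = sin kα (sign `false`). -/
def Phi (s : Bool) (k : ℕ) (α : ℝ) : ℝ :=
  if s then Real.cos (k * α) else Real.sin (k * α)

/-- Associated Legendre function of the second kind, real degree ν, integer order m. -/
def legendreQ (ν : ℝ) (m : ℕ) (t : ℝ) : ℝ :=
  ((-1 : ℝ) ^ m / (2 : ℝ) ^ (ν + 1)) * (Real.Gamma (ν + m + 1) / Real.Gamma (ν + 1)) *
    (t ^ 2 - 1) ^ ((m : ℝ) / 2) *
    ∫ s in (-1 : ℝ)..1, (1 - s ^ 2) ^ ν * (t - s) ^ (-(ν + m + 1))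

/-- The interior toroidal harmonic I_{n,m}^{ν,μ}. -/
def torI (n m : ℕ) (ν μ : Bool) (x : ℝ³) : ℝ :=
  Real.sqrt (coshEta x - Real.cos (thetaOf x)) *
    legendreQ ((n : ℝ) - 1 / 2) m (coshEta x) * Phi ν n (thetaOf x) * Phi μ m (phiOf x)

/-- J_m^+(x) = Re((x₁ + i x₂)^m). -/
def Jp (m : ℤ) (x : ℝ³) : ℝ := ((⟨x 1, x 2⟩ : ℂ) ^ m).re
/-- J_m^−(x) = Im((x₁ + i x₂)^m). -/
def Jm (m : ℤ) (x : ℝ³) : ℝ := ((⟨x 1, x 2⟩ : ℂ) ^ m).im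
/-- Ĵ(x) = −log |x₁ + i x₂|. -/
def Jhat (x : ℝ³) : ℝ := -Real.log (‖(⟨x 1, x 2⟩ : ℂ)‖)

/-- The basic monogenic constant W_m^+ = J_m^+ e₁ − J_m^− e₂. -/
def Wp (m : ℤ) (x : ℝ³) : ℍ[ℝ] := ⟨0, Jp m x, -(Jm m x), 0⟩
/-- The basic monogenic constant W_m^− = J_m^− e₁ + J_m^+ e₂. -/
def Wn (m : ℤ) (x : ℝ³) : ℍ[ℝ] := ⟨0, Jm m x, Jp m x, 0⟩

/-- The 1-form ω_f associated to an 𝒜-valued f. -/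
def omegaF (f : ℝ³ → ℍ[ℝ]) (x v : ℝ³) : ℝ :=
  (f x).re * v 0 - (f x).imI * v 1 - (f x).imJ * v 2

/-- The unit circle γ(t) = (0, cos t, sin t). -/
def circ (t : ℝ) : ℝ³ := ![0, Real.cos t, Real.sin t]

/-- The cohomology coefficient coh f = (1/2π) ∫ ω_f along the unit circle. -/
def cohOp (f : ℝ³ → ℍ[ℝ]) : ℝ :=
  (1 / (2 * Real.pi)) * ∫ t in (0 : ℝ)..(2 * Real.pi), omegaF f (circ t) (deriv circ t)

/-- The coefficients κ^n_{k,m}. -/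
def kap (n k m : ℕ) : ℝ :=
  if n = 0 then
    (if k = 1 then (if m = 0 then -(1 / 2 : ℝ) else (2 * (m : ℝ) - 1) / 2) else 0)
  else if k + 1 = n then -((2 * (n : ℝ) + 2 * (m : ℝ) - 1) / 4)
  else if k = n then (n : ℝ)
  else if k = n + 1 then -((2 * (n : ℝ) - 2 * (m : ℝ) + 1) / 4)
  else 0

/-- The change-of-basis coefficients i*^n_{k,m}. -/
def istar : ℕ → ℕ → ℕ → ℝ
  | 0, k, _ => if k = 0 then 1 else 0
  | (n + 1), k, m =>
    if k = n + 1 then 1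
    else (1 / kap n (n + 1) m) * ∑ j ∈ Finset.Icc (k - 1) n, kap j k m * istar n j m

/-- The inverse change-of-basis coefficients i^n_{k,m} (arguments: n, m, k). -/
def icoef (n m k : ℕ) : ℝ :=
  if k = n then 1
  else if k < n then
    -∑ j ∈ (Finset.Icc (k + 1) n).attach, istar j.1 k m * icoef n m j.1
  else 0
termination_by n - k
decreasing_by
  have hj := j.2
  simp only [Finset.mem_Icc] at hj
  omega

/-- The reverse-Appell toroidal harmonic I*_{n,m}^{ν,μ}. -/
def IstarH (n m : ℕ) (ν μ : Bool) (x : ℝ³) : ℝ :=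
  ∑ k ∈ Finset.range (n + 1), istar n k m * torI k m ν μ x

/-- The exact basic toroidal monogenic T_{n,m}^{ν,μ} = ∂I*_{n−1,m}^{−ν,μ} (for n ≥ 1). -/
def Tmono (n m : ℕ) (ν μ : Bool) (x : ℝ³) : ℍ[ℝ] :=
  gradQ (IstarH (n - 1) m (!ν) μ) x

/-- The annulus D = {z : sinh η₀/(cosh η₀ + 1) < |z| < sinh η₀/(cosh η₀ − 1)}. -/
def annulusD (η₀ : ℝ) : Set ℂ :=
  {z | Real.sinh η₀ / (Real.cosh η₀ + 1) < ‖z‖ ∧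
       ‖z‖ < Real.sinh η₀ / (Real.cosh η₀ - 1)}

/-- The Teodorescu operator 𝒯_D g (w) = −(1/π) ∬_D g(z)/(z−w) dA(z). -/
def teodorescu (D : Set ℂ) (g : ℂ → ℂ) (w : ℂ) : ℂ :=
  -(1 / (Real.pi : ℂ)) * ∫ z in D, g z / (z - w)

/-- The operator Ψ producing an 𝒜-valued monogenic function with scalar part h. -/
def PsiOp (η₀ : ℝ) (h : ℝ³ → ℝ) (x : ℝ³) : ℍ[ℝ] :=
  ⟨h x,
   -(∫ t in (0 : ℝ)..(x 0), pdf 1 h ![t, x 1, x 2]) +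
     (1 / 2) * (teodorescu (annulusD η₀) (fun z => ((pdf 0 h ![0, z.re, z.im] : ℝ) : ℂ)) ⟨x 1, x 2⟩).re,
   -(∫ t in (0 : ℝ)..(x 0), pdf 2 h ![t, x 1, x 2]) -
     (1 / 2) * (teodorescu (annulusD η₀) (fun z => ((pdf 0 h ![0, z.re, z.im] : ℝ) : ℂ)) ⟨x 1, x 2⟩).im,
   0⟩

/-- The basic toroidal monogenic of index n = 0 :
T_{0,m}^{+,μ} = Ψ[I_{0,m}^{+,μ}] − (coh Ψ[I_{0,m}^{+,μ}]) W_{−1}^−. -/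
def T0mono (η₀ : ℝ) (m : ℕ) (μ : Bool) (x : ℝ³) : ℍ[ℝ] :=
  PsiOp η₀ (torI 0 m true μ) x - cohOp (PsiOp η₀ (torI 0 m true μ)) • Wn (-1) x

/-- Membership in M(𝒜): 𝒜-valued, monogenic, square-integrable on Ω_{η₀}. -/
def MemMA (η₀ : ℝ) (f : ℝ³ → ℍ[ℝ]) : Prop :=
  (∀ x ∈ torusDomain η₀, DifferentiableAt ℝ f x) ∧
  (∀ x ∈ torusDomain η₀, (f x).imK = 0) ∧
  (∀ x ∈ torusDomain η₀, CRbar f x = 0) ∧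
  IntegrableOn (fun x => ‖f x‖ ^ 2) (torusDomain η₀)

/-- Membership in M(ℍ): ℍ-valued, monogenic, square-integrable on Ω_{η₀}. -/
def MemMH (η₀ : ℝ) (f : ℝ³ → ℍ[ℝ]) : Prop :=
  (∀ x ∈ torusDomain η₀, DifferentiableAt ℝ f x) ∧
  (∀ x ∈ torusDomain η₀, CRbar f x = 0) ∧
  IntegrableOn (fun x => ‖f x‖ ^ 2) (torusDomain η₀)

/-- The Laplacian Δh = ∂₀²h + ∂₁²h + ∂₂²h. -/
def laplacian (h : ℝ³ → ℝ) (x : ℝ³) : ℝ :=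
  pdf 0 (pdf 0 h) x + pdf 1 (pdf 1 h) x + pdf 2 (pdf 2 h) x

/-- Membership in Har(Ω_{η₀}): real-valued, C², harmonic, square-integrable. -/
def MemHar (η₀ : ℝ) (h : ℝ³ → ℝ) : Prop :=
  (∀ x ∈ torusDomain η₀, ContDiffAt ℝ 2 h x) ∧
  (∀ x ∈ torusDomain η₀, laplacian h x = 0) ∧
  IntegrableOn (fun x => (h x) ^ 2) (torusDomain η₀)

/-- The coefficients j_{n,m}^± (sign `s`, row `n`, integer `m`). -/
def jcoef (s : Bool) (n : ℕ) (m : ℤ) : ℝ :=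
  if 0 ≤ m then
    (1 + if n = 0 then 1 else 0) * (-1 : ℝ) ^ m * Real.sqrt (2 / Real.pi) /
      Real.Gamma ((m : ℝ) + 1 / 2)
  else
    (if s then 1 else -1) * 2 * (-1 : ℝ) ^ m * Real.sqrt (2 / Real.pi) *
      (1 / Real.Gamma ((m : ℝ) + 1 / 2)) *
      (Real.Gamma ((n : ℝ) + (m : ℝ) + 1 / 2) / Real.Gamma ((n : ℝ) - (m : ℝ) + 1 / 2))


/-- The nice region. -/
def Sset (η₀ : ℝ) : Set ℝ³ := {x | Real.exp (2*η₀) * d2sq x < d1sq x}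

lemma isOpen_Sset (η₀ : ℝ) : IsOpen (Sset η₀) := by
  have hc : Continuous (rhoOf) := by
    apply Real.continuous_sqrt.comp
    exact ((continuous_apply 1).pow 2).add ((continuous_apply 2).pow 2)
  have h1 : Continuous d1sq := by
    apply ((hc.add continuous_const).pow 2).add ((continuous_apply 0).pow 2)
  have h2 : Continuous d2sq := by
    apply ((hc.sub continuous_const).pow 2).add ((continuous_apply 0).pow 2)
  exact isOpen_lt (continuous_const.mul h2) h1

lemma rho_nonneg (x : ℝ³) : 0 ≤ rhoOf x := Real.sqrt_nonneg _

lemma rho_sq (x : ℝ³) : rhoOf x ^ 2 = (x 1)^2 + (x 2)^2 := by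
  rw [rhoOf, Real.sq_sqrt] ; positivity

lemma rho_pos {η₀ : ℝ} (hη : 0 < η₀) {x : ℝ³} (hx : x ∈ Sset η₀) : 0 < rhoOf x := by
  rcases eq_or_lt_of_le (rho_nonneg x) with h | h
  · exfalso
    have hx' : Real.exp (2*η₀) * d2sq x < d1sq x := hx
    have hK : 1 < Real.exp (2*η₀) := by
      have : (0:ℝ) < 2*η₀ := by positivity
      calc (1:ℝ) = Real.exp 0 := Real.exp_zero.symm
        _ < _ := Real.exp_lt_exp.mpr this
    have h1 : d1sq x = 1 + (x 0)^2 := by rw [d1sq, ← h]; ring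
    have h2 : d2sq x = 1 + (x 0)^2 := by rw [d2sq, ← h]; ring
    nlinarith [sq_nonneg (x 0)]
  · exact h

lemma core_mem_Sset {η₀ : ℝ} {x : ℝ³} (h0 : x 0 = 0) (h1 : (x 1)^2 + (x 2)^2 = 1) :
    x ∈ Sset η₀ := by
  have hr : rhoOf x = 1 := by rw [rhoOf, h1, Real.sqrt_one]
  show Real.exp (2*η₀) * d2sq x < d1sq x
  rw [d1sq, d2sq, hr, h0]
  norm_num

lemma coords_mem {η₀ η θ φ : ℝ} (hη₀ : 0 < η₀) (hη : η₀ < η) :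
    Real.exp (2*η₀) * d2sq (torusCoords η θ φ) < d1sq (torusCoords η θ φ) := by
  set x := torusCoords η θ φ with hx
  have hcos : Real.cos θ ≤ 1 := Real.cos_le_one θ
  have hcosh : 1 < Real.cosh η := by
    exact Real.one_lt_cosh.mpr (ne_of_gt (lt_trans hη₀ hη))
  have hc : 0 < Real.cosh η - Real.cos θ := by linarith
  have hs : 0 < Real.sinh η := by
    have : (0:ℝ) < η := lt_trans hη₀ hη
    exact Real.sinh_pos_iff.mpr this
  have hx0 : x 0 = Real.sin θ / (Real.cosh η - Real.cos θ) := rfl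
  have hx1 : x 1 = Real.sinh η * Real.cos φ / (Real.cosh η - Real.cos θ) := rfl
  have hx2 : x 2 = Real.sinh η * Real.sin φ / (Real.cosh η - Real.cos θ) := rfl
  have hrho : rhoOf x = Real.sinh η / (Real.cosh η - Real.cos θ) := by
    rw [rhoOf, hx1, hx2]
    rw [show (Real.sinh η * Real.cos φ / (Real.cosh η - Real.cos θ))^2
        + (Real.sinh η * Real.sin φ / (Real.cosh η - Real.cos θ))^2
        = (Real.sinh η / (Real.cosh η - Real.cos θ))^2 by
      field_simp
      nlinarith [Real.sin_sq_add_cos_sq φ]]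
    exact Real.sqrt_sq (by positivity)
  have hd1 : d1sq x = 2 * Real.exp η / (Real.cosh η - Real.cos θ) := by
    rw [d1sq, hrho, hx0, ← Real.cosh_add_sinh]
    field_simp
    linear_combination (Real.sin_sq_add_cos_sq θ - Real.cosh_sq_sub_sinh_sq η)
  have hd2 : d2sq x = 2 * Real.exp (-η) / (Real.cosh η - Real.cos θ) := by
    rw [d2sq, hrho, hx0, ← Real.cosh_sub_sinh]
    field_simp
    linear_combination (Real.sin_sq_add_cos_sq θ - Real.cosh_sq_sub_sinh_sq η)
  rw [hd1, hd2, ← mul_div_assoc, div_lt_div_iff₀ hc hc]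
  have key : Real.exp (2*η₀) * Real.exp (-η) < Real.exp η := by
    rw [← Real.exp_add, Real.exp_lt_exp]
    linarith
  nlinarith [Real.exp_pos η, Real.exp_pos (-η)]
lemma rho_pos' {η₀ : ℝ} (hη : 0 < η₀) {x : ℝ³}
    (hx : Real.exp (2*η₀) * d2sq x < d1sq x) : 0 < rhoOf x := by
  rcases eq_or_lt_of_le (Real.sqrt_nonneg ((x 1) ^ 2 + (x 2) ^ 2)) with h | h
  · exfalso
    have hK : 1 < Real.exp (2*η₀) := by
      calc (1:ℝ) = Real.exp 0 := Real.exp_zero.symm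
        _ < _ := Real.exp_lt_exp.mpr (by positivity)
    have h1 : d1sq x = 1 + (x 0)^2 := by rw [d1sq, rhoOf, ← h]; ring
    have h2 : d2sq x = 1 + (x 0)^2 := by rw [d2sq, rhoOf, ← h]; ring
    nlinarith [sq_nonneg (x 0)]
  · exact h

lemma mem_coords {η₀ : ℝ} (hη₀ : 0 < η₀) {x : ℝ³}
    (hx : Real.exp (2*η₀) * d2sq x < d1sq x) (hd2 : d2sq x ≠ 0) :
    ∃ η θ φ : ℝ, η₀ < η ∧ x = torusCoords η θ φ := by
  set ρ := rhoOf x with hρdef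
  have hρ : 0 < ρ := rho_pos' hη₀ hx
  have hρsq : ρ^2 = (x 1)^2 + (x 2)^2 := Real.sq_sqrt (by positivity)
  set ζ : ℂ := ⟨ρ, x 0⟩ with hζdef
  have hζn : ζ - 1 ≠ 0 := by
    intro h
    apply hd2
    have hre : ρ - 1 = 0 := by
      have := congrArg Complex.re h; simpa using this
    have him : x 0 = 0 := by
      have := congrArg Complex.im h; simpa using this
    rw [d2sq, ← hρdef, him]
    nlinarith
  have hζp : ζ + 1 ≠ 0 := by
    intro h
    have hre : ρ + 1 = 0 := by
      have := congrArg Complex.re h; simpa using this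
    linarith
  set E : ℂ := (ζ+1)/(ζ-1) with hEdef
  have hE0 : E ≠ 0 := div_ne_zero hζp hζn
  have hE1 : E ≠ 1 := by
    intro h
    rw [hEdef, div_eq_one_iff_eq hζn] at h
    have := congrArg Complex.re h; simp at this; linarith
  have hEζ : E * (ζ - 1) = ζ + 1 := div_mul_cancel₀ _ hζn
  set a := E.re with hadef
  set b := E.im with hbdef
  set m := ‖E‖ with hmdef
  have hm0 : 0 < m := norm_pos_iff.mpr hE0
  have hm2 : m^2 = a^2 + b^2 := by
    rw [hmdef, Complex.sq_norm, Complex.normSq_apply]; ring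
  have hd2' : Complex.normSq (ζ - 1) = d2sq x := by
    rw [Complex.normSq_apply, d2sq, ← hρdef]
    simp [hζdef, Complex.sub_re, Complex.sub_im]
    ring
  have hd1' : Complex.normSq (ζ + 1) = d1sq x := by
    rw [Complex.normSq_apply, d1sq, ← hρdef]
    simp [hζdef, Complex.add_re, Complex.add_im]
    ring
  have hd2pos : 0 < d2sq x :=
    lt_of_le_of_ne (by rw [← hd2']; exact Complex.normSq_nonneg _) (Ne.symm hd2)
  have hmd : m^2 * d2sq x = d1sq x := by
    rw [hmdef, Complex.sq_norm, hEdef, Complex.normSq_div, hd1', hd2']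
    field_simp
  have hm1 : Real.exp (2*η₀) < m^2 := by
    rw [← hmd] at hx
    exact lt_of_mul_lt_mul_right hx (le_of_lt hd2pos)
  set η := Real.log m with hηdef
  have hηη : η₀ < η := by
    have hmexp : Real.exp η₀ < m := by
      have h2 : (Real.exp η₀)^2 = Real.exp (2*η₀) := by
        rw [sq, ← Real.exp_add]; ring_nf
      have h1 : (Real.exp η₀)^2 < m^2 := by rw [h2]; exact hm1
      nlinarith [Real.exp_pos η₀]
    calc η₀ = Real.log (Real.exp η₀) := (Real.log_exp η₀).symm
      _ < η := Real.log_lt_log (Real.exp_pos η₀) hmexp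
  have hmeta : Real.exp η = m := Real.exp_log hm0
  have hcosh : Real.cosh η = (m + m⁻¹)/2 := Real.cosh_log hm0
  have hsinh : Real.sinh η = (m - m⁻¹)/2 := Real.sinh_log hm0
  set θ := -Complex.arg E with hθdef
  have hcosθ : Real.cos θ = a/m := by
    rw [hθdef, Real.cos_neg, Complex.cos_arg hE0]
  have hsinθ : Real.sin θ = -(b/m) := by
    rw [hθdef, Real.sin_neg, Complex.sin_arg]
  set D := (a-1)^2 + b^2 with hDdef
  have hD0 : 0 < D := by
    have hne : E - 1 ≠ 0 := sub_ne_zero.mpr hE1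
    have : Complex.normSq (E - 1) = D := by
      rw [Complex.normSq_apply]; simp [Complex.sub_re, Complex.sub_im]; ring
    rw [← this]
    exact Complex.normSq_pos.mpr hne
  have h_re : a*(ρ-1) - b*(x 0) = ρ+1 := by
    have := congrArg Complex.re hEζ
    simpa [Complex.mul_re, Complex.sub_re, Complex.sub_im, Complex.add_re, hζdef] using this
  have h_im : a*(x 0) + b*(ρ-1) = x 0 := by
    have := congrArg Complex.im hEζ
    simpa [Complex.mul_im, Complex.sub_re, Complex.sub_im, Complex.add_im, hζdef] using this
  have hρD : ρ * D = a^2 + b^2 - 1 := by linear_combination (a-1)*h_re + b*h_im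
  have hx0D : (x 0) * D = -(2*b) := by linear_combination (a-1)*h_im - b*h_re
  have hceq : Real.cosh η - Real.cos θ = D/(2*m) := by
    rw [hcosh, hcosθ]
    field_simp
    linear_combination hm2
  -- the angle φ
  set z : ℂ := ⟨x 1, x 2⟩ with hzdef
  have habsz : ‖z‖ = ρ := by
    rw [Complex.norm_def, Complex.normSq_apply, hρdef, rhoOf]
    norm_num [hzdef]
    ring_nf
  have hz0 : z ≠ 0 := by
    intro h; rw [h] at habsz; simp at habsz; linarith
  set φ := Complex.arg z with hφdef
  have hcosφ : Real.cos φ = x 1 / ρ := by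
    rw [hφdef, Complex.cos_arg hz0, habsz]
  have hsinφ : Real.sin φ = x 2 / ρ := by
    rw [hφdef, Complex.sin_arg, habsz]
  have hratio : Real.sinh η / (Real.cosh η - Real.cos θ) = (m^2-1)/D := by
    rw [hsinh, hceq]
    field_simp
  have hm2' : m^2 - 1 = ρ * D := by rw [hm2, hρD]
  have hratio' : Real.sinh η / (Real.cosh η - Real.cos θ) = ρ := by
    rw [hratio, hm2', mul_div_assoc, div_self hD0.ne', mul_one]
  have hratio0 : Real.sin θ / (Real.cosh η - Real.cos θ) = x 0 := by
    rw [hsinθ, hceq]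
    rw [show -(b/m) = (-(2*b))/(2*m) by ring, div_div_div_cancel_right₀]
    rw [← hx0D, mul_div_assoc, div_self hD0.ne', mul_one]
    positivity
  refine ⟨η, θ, φ, hηη, ?_⟩
  funext i
  fin_cases i
  · show x 0 = _
    have key : x 0 = Real.sin θ / (Real.cosh η - Real.cos θ) := hratio0.symm
    simpa [torusCoords] using key
  · show x 1 = _
    have key : x 1 = Real.sinh η * Real.cos φ / (Real.cosh η - Real.cos θ) := by
      rw [mul_div_right_comm, hratio', hcosφ, mul_div_cancel₀ _ hρ.ne']
    simpa [torusCoords] using key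
  · show x 2 = _
    have key : x 2 = Real.sinh η * Real.sin φ / (Real.cosh η - Real.cos θ) := by
      rw [mul_div_right_comm, hratio', hsinφ, mul_div_cancel₀ _ hρ.ne']
    simpa [torusCoords] using key


lemma torusDomain_eq {η₀ : ℝ} (hη₀ : 0 < η₀) : torusDomain η₀ = Sset η₀ := by
  ext x
  constructor
  · rintro (⟨η, θ, φ, hη, rfl⟩ | ⟨h0, h1⟩)
    · exact coords_mem hη₀ hη
    · exact core_mem_Sset h0 h1
  · intro hx
    by_cases hd2 : d2sq x = 0
    · right
      have h1 : (rhoOf x - 1)^2 + (x 0)^2 = 0 := hd2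
      have h2 : rhoOf x = 1 := by nlinarith [sq_nonneg (rhoOf x - 1), sq_nonneg (x 0)]
      have h3 : x 0 = 0 := by nlinarith [sq_nonneg (rhoOf x - 1), sq_nonneg (x 0)]
      refine ⟨h3, ?_⟩
      rw [← rho_sq, h2]; norm_num
    · exact Or.inl (mem_coords hη₀ hx hd2)

def imICLM : ℍ[ℝ] →L[ℝ] ℝ :=
  { toFun := fun q => q.imI
    map_add' := by intros; simp
    map_smul' := by intros; simp
    cont := Quaternion.continuous_imI }

def imJCLM : ℍ[ℝ] →L[ℝ] ℝ :=
  { toFun := fun q => q.imJ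
    map_add' := by intros; simp
    map_smul' := by intros; simp
    cont := Quaternion.continuous_imJ }

def imKCLM : ℍ[ℝ] →L[ℝ] ℝ :=
  { toFun := fun q => q.imK
    map_add' := by intros; simp
    map_smul' := by intros; simp
    cont := Quaternion.continuous_imK }

def reCLM' : ℍ[ℝ] →L[ℝ] ℝ :=
  { toFun := fun q => q.re
    map_add' := by intros; simp
    map_smul' := by intros; simp
    cont := Quaternion.continuous_re }

def piCLM : ℍ[ℝ] →L[ℝ] ℂ :=
  (Complex.ofRealCLM.comp imICLM) + imJCLM.smulRight (-Complex.I)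

lemma piCLM_apply (q : ℍ[ℝ]) : piCLM q = (q.imI : ℂ) - (q.imJ : ℂ) * Complex.I := by
  simp [piCLM, imICLM, imJCLM, ContinuousLinearMap.smulRight_apply]
  change (q.imI : ℂ) + -((q.imJ : ℂ) * Complex.I) = (q.imI : ℂ) - (q.imJ : ℂ) * Complex.I
  ring

def iotaCLM : ℂ →L[ℝ] ℝ³ :=
  ContinuousLinearMap.pi ![0, Complex.reCLM, Complex.imCLM]

lemma iotaCLM_apply (z : ℂ) : iotaCLM z = ![0, z.re, z.im] := by
  funext i
  fin_cases i <;> simp [iotaCLM]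

lemma vec_decomp (v : ℝ³) :
    v = v 0 • (Pi.single 0 1 : ℝ³) + v 1 • (Pi.single 1 1 : ℝ³) + v 2 • (Pi.single 2 1 : ℝ³) := by
  funext i
  fin_cases i <;> simp [Pi.single_apply]

lemma clm_apply_decomp {E : Type*} [NormedAddCommGroup E] [NormedSpace ℝ E]
    (L : ℝ³ →L[ℝ] E) (v : ℝ³) :
    L v = v 0 • L (Pi.single 0 1) + v 1 • L (Pi.single 1 1) + v 2 • L (Pi.single 2 1) := by
  conv_lhs => rw [vec_decomp v]
  simp

lemma const_of_uIcc {E : Type*} [NormedAddCommGroup E] [NormedSpace ℝ E]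
    {g : ℝ → E} {a b : ℝ} (h : ∀ t ∈ Set.uIcc a b, HasDerivAt g 0 t) : g b = g a := by
  rcases le_total a b with hab | hab
  · have := constant_of_has_deriv_right_zero (f := g) (a := a) (b := b)
      (fun t ht => ((h t (by rwa [Set.uIcc_of_le hab])).continuousAt).continuousWithinAt)
      (fun t ht => ((h t (by rw [Set.uIcc_of_le hab]; exact Set.mem_Icc_of_Ico ht)).hasDerivWithinAt))
    exact this b (Set.right_mem_Icc.mpr hab)
  · have := constant_of_has_deriv_right_zero (f := g) (a := b) (b := a)
      (fun t ht => ((h t (by rwa [Set.uIcc_of_ge hab])).continuousAt).continuousWithinAt)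
      (fun t ht => ((h t (by rw [Set.uIcc_of_ge hab]; exact Set.mem_Icc_of_Ico ht)).hasDerivWithinAt))
    exact (this a (Set.right_mem_Icc.mpr hab)).symm

lemma vert_line (x1 x2 : ℝ) (t : ℝ) :
    (![t, x1, x2] : ℝ³) = ![0, x1, x2] + t • (Pi.single 0 1 : ℝ³) := by
  funext i
  fin_cases i <;> simp [Pi.single_apply]

lemma hasDerivAt_vert (x1 x2 : ℝ) (t : ℝ) :
    HasDerivAt (fun s : ℝ => (![s, x1, x2] : ℝ³)) (Pi.single 0 1) t := by
  have : (fun s : ℝ => (![s, x1, x2] : ℝ³))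
      = fun s => ![0, x1, x2] + s • (Pi.single 0 1 : ℝ³) := by
    funext s; exact vert_line x1 x2 s
  rw [this]
  simpa using ((hasDerivAt_id t).smul_const (Pi.single 0 1 : ℝ³)).const_add ![0, x1, x2]

lemma hasDerivAt_seg (x v : ℝ³) (t : ℝ) :
    HasDerivAt (fun s : ℝ => x + s • v) v t := by
  simpa using ((hasDerivAt_id t).smul_const v).const_add x

lemma hasDerivAt_circ (s : ℝ) :
    HasDerivAt (fun s : ℝ => (![0, Real.cos s, Real.sin s] : ℝ³))
      (![0, -Real.sin s, Real.cos s]) s := by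
  rw [hasDerivAt_pi]
  intro i
  fin_cases i
  · simpa using hasDerivAt_const s (0:ℝ)
  · simpa using Real.hasDerivAt_cos s
  · simpa using Real.hasDerivAt_sin s

section Partials

variable {η₀ : ℝ} {f : ℝ³ → ℍ[ℝ]}

/-- All the information on the Fréchet derivative of a monogenic constant. -/
lemma partials (hη₀ : 0 < η₀)
    (hC1 : ∀ x ∈ torusDomain η₀, ContDiffAt ℝ 1 f x)
    (hA : ∀ x ∈ torusDomain η₀, (f x).imK = 0)
    (h1 : ∀ x ∈ torusDomain η₀, pdf 0 f x + e1 * pdf 1 f x + e2 * pdf 2 f x = 0)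
    (h2 : ∀ x ∈ torusDomain η₀, pdf 0 f x - e1 * pdf 1 f x - e2 * pdf 2 f x = 0)
    {y : ℝ³} (hy : y ∈ torusDomain η₀) :
    fderiv ℝ f y (Pi.single 0 1) = 0 ∧
    (∀ v : ℝ³, (fderiv ℝ f y v).re = 0) ∧
    (fderiv ℝ f y (Pi.single 1 1)).imI = -(fderiv ℝ f y (Pi.single 2 1)).imJ ∧
    (fderiv ℝ f y (Pi.single 1 1)).imJ = (fderiv ℝ f y (Pi.single 2 1)).imI ∧
    (∀ v : ℝ³, (fderiv ℝ f y v).imK = 0) := by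
  have hdiff : DifferentiableAt ℝ f y := (hC1 y hy).differentiableAt one_ne_zero
  set L := fderiv ℝ f y with hL
  set p0 := L (Pi.single 0 1) with hp0def
  set p1 := L (Pi.single 1 1) with hp1def
  set p2 := L (Pi.single 2 1) with hp2def
  have hyS : y ∈ Sset η₀ := by rw [← torusDomain_eq hη₀]; exact hy
  -- imK of everything is zero
  have hKcomp : imKCLM.comp L = 0 := by
    have hev : (⇑imKCLM ∘ f) =ᶠ[nhds y] (fun _ => (0:ℝ)) := by
      refine Filter.eventually_of_mem ((isOpen_Sset η₀).mem_nhds hyS) (fun z hz => ?_)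
      show (f z).imK = 0
      exact hA z (by rw [torusDomain_eq hη₀]; exact hz)
    have h1' : fderiv ℝ (⇑imKCLM ∘ f) y = imKCLM.comp L :=
      (imKCLM.hasFDerivAt.comp y hdiff.hasFDerivAt).fderiv
    have h2' : fderiv ℝ (⇑imKCLM ∘ f) y = 0 := by
      rw [hev.fderiv_eq]
      exact fderiv_const_apply 0
    rw [← h1', h2']
  have hK : ∀ v : ℝ³, (L v).imK = 0 := by
    intro v
    have := congrFun (congrArg (fun (M : ℝ³ →L[ℝ] ℝ) => (M : ℝ³ → ℝ)) hKcomp) v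
    exact this
  -- the equations
  have hbar : p0 + e1 * p1 + e2 * p2 = 0 := h1 y hy
  have hconj : p0 - e1 * p1 - e2 * p2 = 0 := h2 y hy
  have hp0 : p0 = 0 := by
    have hsum : (p0 + e1 * p1 + e2 * p2) + (p0 - e1 * p1 - e2 * p2) = p0 + p0 := by abel
    rw [hbar, hconj, add_zero] at hsum
    have h2 : (2:ℝ) • p0 = 0 := by rw [two_smul]; exact hsum.symm
    rcases smul_eq_zero.mp h2 with h | h
    · norm_num at h
    · exact h
  have hvec : e1 * p1 + e2 * p2 = 0 := by
    rw [hp0, zero_add] at hbar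
    exact hbar
  have hK1 : p1.imK = 0 := hK _
  have hK2 : p2.imK = 0 := hK _
  have e_re : -p1.imI - p2.imJ = 0 := by
    have := congrArg QuaternionAlgebra.re hvec
    simp only [Quaternion.re_mul, Quaternion.re_add] at this
    simp [e1, e2] at this
    linarith
  have e_i : p1.re + p2.imK = 0 := by
    have := congrArg QuaternionAlgebra.imI hvec
    simp only [Quaternion.imI_mul, Quaternion.imI_add] at this
    simpa [e1, e2] using this
  have e_j : -p1.imK + p2.re = 0 := by
    have := congrArg QuaternionAlgebra.imJ hvec
    simp only [Quaternion.imJ_mul, Quaternion.imJ_add] at this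
    simpa [e1, e2] using this
  have e_k : p1.imJ - p2.imI = 0 := by
    have := congrArg QuaternionAlgebra.imK hvec
    simp only [Quaternion.imK_mul, Quaternion.imK_add] at this
    simp [e1, e2] at this
    linarith
  have hre1 : p1.re = 0 := by rw [hK2] at e_i; linarith
  have hre2 : p2.re = 0 := by rw [hK1] at e_j; linarith
  refine ⟨hp0, ?_, by linarith, by linarith, hK⟩
  intro v
  rw [clm_apply_decomp L v]
  simp only [Quaternion.re_add, Quaternion.re_smul, ← hp0def, ← hp1def, ← hp2def,
    hp0, hre1, hre2]
  simp

end Partials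
section Geometry

lemma comp12_1 (a b c : ℝ) : (![a,b,c] : ℝ³) 1 = b := rfl
lemma comp12_2 (a b c : ℝ) : (![a,b,c] : ℝ³) 2 = c := rfl
lemma comp12_0 (a b c : ℝ) : (![a,b,c] : ℝ³) 0 = a := rfl

lemma exp_gt_one {η₀ : ℝ} (hη₀ : 0 < η₀) : 1 < Real.exp (2*η₀) := by
  calc (1:ℝ) = Real.exp 0 := Real.exp_zero.symm
    _ < _ := Real.exp_lt_exp.mpr (by positivity)

lemma vert_mem {η₀ : ℝ} (hη₀ : 0 < η₀) {x : ℝ³} (hx : x ∈ Sset η₀)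
    {t : ℝ} (ht : t ∈ Set.uIcc 0 (x 0)) : (![t, x 1, x 2] : ℝ³) ∈ Sset η₀ := by
  have hx' : Real.exp (2*η₀) * d2sq x < d1sq x := hx
  have hK := exp_gt_one hη₀
  have ht2 : t^2 ≤ (x 0)^2 := by
    rcases le_total 0 (x 0) with h | h
    · rw [Set.uIcc_of_le h] at ht
      nlinarith [ht.1, ht.2]
    · rw [Set.uIcc_of_ge h] at ht
      nlinarith [ht.1, ht.2]
  have hrho : rhoOf ![t, x 1, x 2] = rhoOf x := by
    rw [rhoOf, rhoOf, comp12_1, comp12_2]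
  show Real.exp (2*η₀) * d2sq _ < d1sq _
  rw [d1sq, d2sq, hrho, comp12_0]
  rw [d1sq, d2sq] at hx'
  nlinarith [hx', ht2, hK]

lemma seg_mem {η₀ : ℝ} (hη₀ : 0 < η₀) {x1 x2 : ℝ} (hx : (![0, x1, x2] : ℝ³) ∈ Sset η₀)
    {t : ℝ} (ht : t ∈ Set.uIcc 0 1) :
    (![0, (1-t+t/rhoOf ![0,x1,x2]) * x1, (1-t+t/rhoOf ![0,x1,x2]) * x2] : ℝ³) ∈ Sset η₀ := by
  set ρ := rhoOf (![0,x1,x2] : ℝ³) with hρdef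
  have hρ : 0 < ρ := rho_pos hη₀ hx
  have hρsq : ρ^2 = x1^2 + x2^2 := by
    rw [hρdef, rhoOf, comp12_1, comp12_2]
    exact Real.sq_sqrt (by positivity)
  have ht' : 0 ≤ t ∧ t ≤ 1 := by
    rcases Set.mem_uIcc.mp ht with h | h
    · exact ⟨h.1, h.2⟩
    · constructor <;> linarith [h.1, h.2]
  obtain ⟨ht0, ht1⟩ := ht'
  set k := 1 - t + t/ρ with hkdef
  have hk0 : 0 ≤ k := by
    rw [hkdef]
    have : 0 ≤ t/ρ := by positivity
    linarith
  have hrho' : rhoOf (![0, k*x1, k*x2] : ℝ³) = k * ρ := by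
    rw [rhoOf, comp12_1, comp12_2]
    rw [show (k*x1)^2 + (k*x2)^2 = k^2 * (x1^2+x2^2) by ring, ← hρsq]
    rw [show k^2 * ρ^2 = (k*ρ)^2 by ring]
    exact Real.sqrt_sq (by positivity)
  have hkρ : k * ρ = (1-t)*ρ + t := by
    rw [hkdef]; field_simp
  have hK := exp_gt_one hη₀
  have hx' : Real.exp (2*η₀) * d2sq ![0,x1,x2] < d1sq ![0,x1,x2] := hx
  rw [d1sq, d2sq, ← hρdef, comp12_0] at hx'
  show Real.exp (2*η₀) * d2sq _ < d1sq _
  rw [d1sq, d2sq, hrho', hkρ, comp12_0]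
  have hpos : 0 < (ρ+1)^2 - Real.exp (2*η₀)*(ρ-1)^2 := by nlinarith [hx']
  rcases eq_or_lt_of_le ht0 with h0 | h0
  · rw [← h0]
    nlinarith [hx']
  · nlinarith [hpos, mul_nonneg (sq_nonneg (1-t)) hpos.le, sq_nonneg (1-t),
      mul_pos h0 h0, mul_nonneg (mul_nonneg ht0 (sub_nonneg.mpr ht1)) (by positivity : (0:ℝ) ≤ ρ+1)]

lemma circle_mem {η₀ : ℝ} (s : ℝ) : (![0, Real.cos s, Real.sin s] : ℝ³) ∈ Sset η₀ := by
  apply core_mem_Sset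
  · rfl
  · rw [comp12_1, comp12_2]
    nlinarith [Real.sin_sq_add_cos_sq s]

end Geometry
section Const

variable {η₀ : ℝ} {f : ℝ³ → ℍ[ℝ]}

lemma f_vert (hη₀ : 0 < η₀)
    (hC1 : ∀ x ∈ torusDomain η₀, ContDiffAt ℝ 1 f x)
    (hA : ∀ x ∈ torusDomain η₀, (f x).imK = 0)
    (h1 : ∀ x ∈ torusDomain η₀, pdf 0 f x + e1 * pdf 1 f x + e2 * pdf 2 f x = 0)
    (h2 : ∀ x ∈ torusDomain η₀, pdf 0 f x - e1 * pdf 1 f x - e2 * pdf 2 f x = 0)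
    {x : ℝ³} (hx : x ∈ torusDomain η₀) : f x = f ![0, x 1, x 2] := by
  have hxS : x ∈ Sset η₀ := by rw [← torusDomain_eq hη₀]; exact hx
  have hx3 : (![x 0, x 1, x 2] : ℝ³) = x := by
    funext i; fin_cases i <;> rfl
  have key : ∀ t ∈ Set.uIcc (0:ℝ) (x 0), HasDerivAt (fun s => f ![s, x 1, x 2]) 0 t := by
    intro t ht
    have hmem : (![t, x 1, x 2] : ℝ³) ∈ Sset η₀ := vert_mem hη₀ hxS ht
    have hmem' : (![t, x 1, x 2] : ℝ³) ∈ torusDomain η₀ := by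
      rw [torusDomain_eq hη₀]; exact hmem
    obtain ⟨hp0, -, -, -, -⟩ := partials hη₀ hC1 hA h1 h2 hmem'
    have hd := (hC1 _ hmem').differentiableAt one_ne_zero
    have hcomp := hd.hasFDerivAt.comp_hasDerivAt t (hasDerivAt_vert (x 1) (x 2) t)
    rw [hp0] at hcomp
    exact hcomp
  have hconst := const_of_uIcc key
  calc f x = f ![x 0, x 1, x 2] := by rw [hx3]
    _ = f ![0, x 1, x 2] := hconst

lemma re_const (hη₀ : 0 < η₀)
    (hC1 : ∀ x ∈ torusDomain η₀, ContDiffAt ℝ 1 f x)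
    (hA : ∀ x ∈ torusDomain η₀, (f x).imK = 0)
    (h1 : ∀ x ∈ torusDomain η₀, pdf 0 f x + e1 * pdf 1 f x + e2 * pdf 2 f x = 0)
    (h2 : ∀ x ∈ torusDomain η₀, pdf 0 f x - e1 * pdf 1 f x - e2 * pdf 2 f x = 0)
    {x : ℝ³} (hx : x ∈ torusDomain η₀) : (f x).re = (f ![0, 1, 0]).re := by
  have hxS : x ∈ Sset η₀ := by rw [← torusDomain_eq hη₀]; exact hx
  -- generic: along any differentiable path inside the domain, re ∘ f is constant
  have hre_path : ∀ (γ : ℝ → ℝ³) (v : ℝ → ℝ³) (a b : ℝ),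
      (∀ t ∈ Set.uIcc a b, HasDerivAt γ (v t) t) →
      (∀ t ∈ Set.uIcc a b, γ t ∈ Sset η₀) →
      (f (γ b)).re = (f (γ a)).re := by
    intro γ v a b hγ hmem
    have key : ∀ t ∈ Set.uIcc a b, HasDerivAt (fun s => (f (γ s)).re) 0 t := by
      intro t ht
      have hmem' : γ t ∈ torusDomain η₀ := by rw [torusDomain_eq hη₀]; exact hmem t ht
      obtain ⟨-, hre, -, -, -⟩ := partials hη₀ hC1 hA h1 h2 hmem'
      have hd := (hC1 _ hmem').differentiableAt one_ne_zero
      have hcomp := (reCLM'.hasFDerivAt.comp (γ t) hd.hasFDerivAt).comp_hasDerivAt t (hγ t ht)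
      have : (reCLM'.comp (fderiv ℝ f (γ t))) (v t) = 0 := by
        have := hre (v t)
        exact this
      rw [this] at hcomp
      exact hcomp
    exact const_of_uIcc key
  -- step 0 : drop to the plane
  have h0 : f x = f ![0, x 1, x 2] := f_vert hη₀ hC1 hA h1 h2 hx
  have hx'S : (![0, x 1, x 2] : ℝ³) ∈ Sset η₀ :=
    vert_mem hη₀ hxS Set.left_mem_uIcc
  set ρ := rhoOf (![0, x 1, x 2] : ℝ³) with hρdef
  have hρ : 0 < ρ := rho_pos hη₀ hx'S
  -- step 1 : radial segment to the unit circle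
  have hσeq : (fun s : ℝ => (![0, (1-s+s/ρ) * x 1, (1-s+s/ρ) * x 2] : ℝ³))
      = fun s => (![0, x 1, x 2] : ℝ³) + s • (![0, (1/ρ-1) * x 1, (1/ρ-1) * x 2] : ℝ³) := by
    funext s
    funext i
    fin_cases i <;> simp <;> ring
  have hstep1 : (f ![0, (1-1+1/ρ) * x 1, (1-1+1/ρ) * x 2]).re
      = (f ![0, (1-0+0/ρ) * x 1, (1-0+0/ρ) * x 2]).re := by
    apply hre_path (fun s : ℝ => (![0, (1-s+s/ρ) * x 1, (1-s+s/ρ) * x 2] : ℝ³))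
      (fun _ => (![0, (1/ρ-1) * x 1, (1/ρ-1) * x 2] : ℝ³)) 0 1
    · intro t _
      rw [hσeq]
      exact hasDerivAt_seg _ _ t
    · intro t ht
      exact seg_mem hη₀ hx'S ht
  have hv1 : (![0, (1-1+1/ρ) * x 1, (1-1+1/ρ) * x 2] : ℝ³) = ![0, x 1/ρ, x 2/ρ] := by
    funext i; fin_cases i <;> norm_num <;> ring
  have hv0 : (![0, (1-0+0/ρ) * x 1, (1-0+0/ρ) * x 2] : ℝ³) = ![0, x 1, x 2] := by
    funext i; fin_cases i <;> norm_num
  rw [hv1, hv0] at hstep1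
  -- step 2 : the arc along the unit circle
  set z : ℂ := ⟨x 1, x 2⟩ with hzdef
  have habs : ‖z‖ = ρ := by
    rw [Complex.norm_def, hρdef, rhoOf, comp12_1, comp12_2]
    congr 1
    rw [Complex.normSq_apply]
    ring
  have hz0 : z ≠ 0 := by
    intro h; rw [h] at habs; simp at habs; linarith
  set φ := Complex.arg z with hφdef
  have hcirc : (![0, x 1/ρ, x 2/ρ] : ℝ³) = ![0, Real.cos φ, Real.sin φ] := by
    funext i
    fin_cases i
    · rfl
    · show x 1/ρ = Real.cos φ
      rw [hφdef, Complex.cos_arg hz0, habs]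
    · show x 2/ρ = Real.sin φ
      rw [hφdef, Complex.sin_arg, habs]
  have hstep2 : (f ![0, Real.cos 0, Real.sin 0]).re = (f ![0, Real.cos φ, Real.sin φ]).re := by
    apply hre_path (fun s : ℝ => (![0, Real.cos s, Real.sin s] : ℝ³))
      (fun s => (![0, -Real.sin s, Real.cos s] : ℝ³)) φ 0
    · intro t _
      exact hasDerivAt_circ t
    · intro t _
      exact circle_mem t
  have hfin : (![0, Real.cos 0, Real.sin 0] : ℝ³) = ![0, 1, 0] := by
    rw [Real.cos_zero, Real.sin_zero]
  rw [h0, ← hstep1, hcirc, ← hstep2, hfin]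

end Const
section Annulus

lemma annulus_mem {η₀ : ℝ} (hη₀ : 0 < η₀) {z : ℂ} (hz : z ∈ annulusD η₀) :
    (![0, z.re, z.im] : ℝ³) ∈ Sset η₀ := by
  obtain ⟨hlo, hhi⟩ := hz
  set r := ‖z‖ with hrdef
  set c := Real.cosh η₀ with hcdef
  set s := Real.sinh η₀ with hsdef
  have hc : 1 < c := Real.one_lt_cosh.mpr (ne_of_gt hη₀)
  have hs : 0 < s := Real.sinh_pos_iff.mpr hη₀
  have hr : 0 ≤ r := norm_nonneg z
  have h1 : s < r * (c+1) := by
    rw [div_lt_iff₀ (by linarith : (0:ℝ) < c+1)] at hlo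
    linarith [hlo]
  have h2 : r * (c-1) < s := by
    rw [lt_div_iff₀ (by linarith : (0:ℝ) < c-1)] at hhi
    linarith [hhi]
  have pyth : c^2 - s^2 = 1 := Real.cosh_sq_sub_sinh_sq η₀
  have hexp : Real.exp (2*η₀) = (c+s)^2 := by
    rw [show 2*η₀ = η₀ + η₀ by ring, Real.exp_add, ← Real.cosh_add_sinh η₀]
    ring
  have hrho : rhoOf (![0, z.re, z.im] : ℝ³) = r := by
    rw [rhoOf, comp12_1, comp12_2, hrdef, Complex.norm_def]
    congr 1
    rw [Complex.normSq_apply]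
    ring
  show Real.exp (2*η₀) * d2sq _ < d1sq _
  rw [d1sq, d2sq, hrho, comp12_0, hexp]
  have hA : 0 < (r+1) + (c+s)*(r-1) := by
    nlinarith [mul_pos (show (0:ℝ) < 1+c+s by linarith)
      (show (0:ℝ) < r*(c+1) - s by linarith)]
  have hB : 0 < (r+1) - (c+s)*(r-1) := by
    nlinarith [mul_pos (show (0:ℝ) < 1+c+s by linarith)
      (show (0:ℝ) < s - r*(c-1) by linarith)]
  nlinarith [mul_pos hA hB]

lemma F_diff {η₀ : ℝ} {f : ℝ³ → ℍ[ℝ]} (hη₀ : 0 < η₀)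
    (hC1 : ∀ x ∈ torusDomain η₀, ContDiffAt ℝ 1 f x)
    (hA : ∀ x ∈ torusDomain η₀, (f x).imK = 0)
    (h1 : ∀ x ∈ torusDomain η₀, pdf 0 f x + e1 * pdf 1 f x + e2 * pdf 2 f x = 0)
    (h2 : ∀ x ∈ torusDomain η₀, pdf 0 f x - e1 * pdf 1 f x - e2 * pdf 2 f x = 0) :
    DifferentiableOn ℂ
      (fun z : ℂ => ((f ![0, z.re, z.im]).imI : ℂ) - ((f ![0, z.re, z.im]).imJ : ℂ) * Complex.I)
      (annulusD η₀) := by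
  have hFeq : (fun z : ℂ => ((f ![0, z.re, z.im]).imI : ℂ) - ((f ![0, z.re, z.im]).imJ : ℂ) * Complex.I)
      = ⇑piCLM ∘ f ∘ ⇑iotaCLM := by
    funext w
    show _ = piCLM (f (iotaCLM w))
    rw [iotaCLM_apply, piCLM_apply]
  rw [hFeq]
  intro z hz
  have hyS : (![0, z.re, z.im] : ℝ³) ∈ Sset η₀ := annulus_mem hη₀ hz
  have hyD : (![0, z.re, z.im] : ℝ³) ∈ torusDomain η₀ := by
    rw [torusDomain_eq hη₀]; exact hyS
  obtain ⟨-, -, hIJ, hJI, -⟩ := partials hη₀ hC1 hA h1 h2 hyD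
  have hd := (hC1 _ hyD).differentiableAt one_ne_zero
  set L := fderiv ℝ f ![0, z.re, z.im] with hLdef
  set p1 := L (Pi.single 1 1) with hp1def
  set p2 := L (Pi.single 2 1) with hp2def
  set cc : ℂ := ⟨p1.imI, -p1.imJ⟩ with hccdef
  set M : ℂ →L[ℂ] ℂ := cc • (1 : ℂ →L[ℂ] ℂ) with hMdef
  have hdy : HasFDerivAt f L (iotaCLM z) := by
    rw [iotaCLM_apply]
    exact hd.hasFDerivAt
  have hreal : HasFDerivAt (⇑piCLM ∘ f ∘ ⇑iotaCLM) ((piCLM.comp L).comp iotaCLM) z := by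
    exact (piCLM.hasFDerivAt.comp (iotaCLM z) hdy).comp z iotaCLM.hasFDerivAt
  have hres : M.restrictScalars ℝ = (piCLM.comp L).comp iotaCLM := by
    apply ContinuousLinearMap.ext
    intro w
    have hiw : iotaCLM w = w.re • (Pi.single 1 1 : ℝ³) + w.im • (Pi.single 2 1 : ℝ³) := by
      rw [iotaCLM_apply]
      funext i
      fin_cases i <;> simp [Pi.single_apply]
    show M w = piCLM (L (iotaCLM w))
    rw [hiw, map_add, L.map_smul, L.map_smul, ← hp1def, ← hp2def, map_add,
      piCLM.map_smul, piCLM.map_smul, piCLM_apply, piCLM_apply]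
    rw [hMdef, hccdef]
    apply Complex.ext <;>
      simp [ContinuousLinearMap.smul_apply, ContinuousLinearMap.one_apply,
        Complex.mul_re, Complex.mul_im, Complex.add_re, Complex.add_im,
        Complex.smul_re, Complex.smul_im, hIJ, hJI] <;>
      ring
  exact (hasFDerivAt_of_restrictScalars (𝕜 := ℝ) (f' := M) hreal hres).differentiableAt.differentiableWithinAt

end Annulus

/-- structure of 𝒜-valued monogenic constants on the solid torus Ω_{η₀}. -/
theorem stmt_1 (η₀ : ℝ) (hη : 0 < η₀) (f : ℝ³ → ℍ[ℝ])
    (hC1 : ∀ x ∈ torusDomain η₀, ContDiffAt ℝ 1 f x)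
    (hA : ∀ x ∈ torusDomain η₀, (f x).imK = 0)
    (h1 : ∀ x ∈ torusDomain η₀, CRbar f x = 0)
    (h2 : ∀ x ∈ torusDomain η₀, CRconj f x = 0) :
    (∀ x ∈ torusDomain η₀, ∀ y ∈ torusDomain η₀, (f x).re = (f y).re) ∧
    (∀ x ∈ torusDomain η₀,
      pdf 0 (fun y => (f y).imI) x = 0 ∧ pdf 0 (fun y => (f y).imJ) x = 0) ∧
    (∃ F : ℂ → ℂ, DifferentiableOn ℂ F (annulusD η₀) ∧
      ∀ x ∈ torusDomain η₀,
        ((f x).imI : ℂ) - ((f x).imJ : ℂ) * Complex.I = F ⟨x 1, x 2⟩) := by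
  have h1' : ∀ x ∈ torusDomain η₀, pdf 0 f x + e1 * pdf 1 f x + e2 * pdf 2 f x = 0 := h1
  have h2' : ∀ x ∈ torusDomain η₀, pdf 0 f x - e1 * pdf 1 f x - e2 * pdf 2 f x = 0 := h2
  refine ⟨?_, ?_, ?_⟩
  · intro x hx y hy
    rw [re_const hη hC1 hA h1' h2' hx, re_const hη hC1 hA h1' h2' hy]
  · intro x hx
    have hd := (hC1 x hx).differentiableAt one_ne_zero
    obtain ⟨hp0, -, -, -, -⟩ := partials hη hC1 hA h1' h2' hx
    constructor
    · have hcomp : fderiv ℝ (⇑imICLM ∘ f) x = imICLM.comp (fderiv ℝ f x) :=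
        (imICLM.hasFDerivAt.comp x hd.hasFDerivAt).fderiv
      have heq : pdf 0 (fun y => (f y).imI) x = imICLM ((fderiv ℝ f x) (Pi.single 0 1)) := by
        show fderiv ℝ (⇑imICLM ∘ f) x (Pi.single 0 1) = _
        rw [hcomp]; rfl
      rw [heq, hp0]
      simp [imICLM]
    · have hcomp : fderiv ℝ (⇑imJCLM ∘ f) x = imJCLM.comp (fderiv ℝ f x) :=
        (imJCLM.hasFDerivAt.comp x hd.hasFDerivAt).fderiv
      have heq : pdf 0 (fun y => (f y).imJ) x = imJCLM ((fderiv ℝ f x) (Pi.single 0 1)) := by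
        show fderiv ℝ (⇑imJCLM ∘ f) x (Pi.single 0 1) = _
        rw [hcomp]; rfl
      rw [heq, hp0]
      simp [imJCLM]
  · refine ⟨fun z : ℂ => ((f ![0, z.re, z.im]).imI : ℂ) - ((f ![0, z.re, z.im]).imJ : ℂ) * Complex.I,
      F_diff hη hC1 hA h1' h2', fun x hx => ?_⟩
    show ((f x).imI : ℂ) - ((f x).imJ : ℂ) * Complex.I
      = ((f ![0, x 1, x 2]).imI : ℂ) - ((f ![0, x 1, x 2]).imJ : ℂ) * Complex.I
    rw [f_vert hη hC1 hA h1' h2' hx]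

end Toro
end
end

section
/- Let Ω ⊆ ℝ³ be open and let f = f₀ + f₁e₁ + f₂e₂ : Ω → 𝒜 be a continuously differentiable monogenic function whose scalar component f₀ is constant on Ω. Then ∂f = 0 on Ω, i.e. f is a monogenic constant. -/
open MeasureTheory Filter Quaternion

noncomputable section

namespace Toro

set_option maxHeartbeats 1000000 in
/-- an 𝒜-valued monogenic function with constant scalar part is a
monogenic constant. -/
theorem stmt_2 (Ω : Set ℝ³) (hΩ : IsOpen Ω) (f : ℝ³ → ℍ[ℝ])
    (hC1 : ∀ x ∈ Ω, ContDiffAt ℝ 1 f x)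
    (hA : ∀ x ∈ Ω, (f x).imK = 0)
    (hmono : ∀ x ∈ Ω, CRbar f x = 0)
    (hconst : ∀ x ∈ Ω, ∀ y ∈ Ω, (f x).re = (f y).re) :
    ∀ x ∈ Ω, CRconj f x = 0 := by
  intro x hx
  have hd : DifferentiableAt ℝ f x := (hC1 x hx).differentiableAt one_ne_zero
  have hΩx : Ω ∈ nhds x := hΩ.mem_nhds hx
  set L := fderiv ℝ f x with hL
  -- a continuous-linear-map component version
  have hcomp : ∀ (g : ℍ[ℝ] →ₗ[ℝ] ℝ) (c : ℝ),
      ((fun y => g (f y)) =ᶠ[nhds x] fun _ => c) → ∀ v, g (L v) = 0 := by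
    intro g c hev v
    have h1 : HasFDerivAt (fun y => g (f y))
        ((g.toContinuousLinearMap).comp L) x :=
      (g.toContinuousLinearMap.hasFDerivAt).comp x hd.hasFDerivAt
    have h2 : HasFDerivAt (fun _ : ℝ³ => c)
        ((g.toContinuousLinearMap).comp L) x := h1.congr_of_eventuallyEq hev.symm
    have h3 : (g.toContinuousLinearMap).comp L = 0 :=
      h2.unique (hasFDerivAt_const c x)
    have := congrArg (fun (T : ℝ³ →L[ℝ] ℝ) => T v) h3
    simpa using this
  have hre : ∀ v, (L v).re = 0 := by
    refine hcomp (QuaternionAlgebra.reₗ (-1 : ℝ) 0 (-1)) ((f x).re) ?_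
    exact Filter.eventually_of_mem hΩx (fun y hy => hconst y hy x hx)
  have hiK : ∀ v, (L v).imK = 0 := by
    refine hcomp (QuaternionAlgebra.imKₗ (-1 : ℝ) 0 (-1)) 0 ?_
    exact Filter.eventually_of_mem hΩx (fun y hy => hA y hy)
  have hpdf : ∀ i, pdf i f x = L (Pi.single i 1) := fun i => rfl
  have hm := hmono x hx
  rw [CRbar] at hm
  rw [CRconj]
  set a := pdf 0 f x with ha
  set b := pdf 1 f x with hb
  set c := pdf 2 f x with hc
  have hbre : b.re = 0 := hre _
  have hcre : c.re = 0 := hre _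
  have hare : a.re = 0 := hre _
  have hbK : b.imK = 0 := hiK _
  have hcK : c.imK = 0 := hiK _
  have haK : a.imK = 0 := hiK _
  have hm1 := congrArg QuaternionAlgebra.re hm
  have hm2 := congrArg QuaternionAlgebra.imI hm
  have hm3 := congrArg QuaternionAlgebra.imJ hm
  have hm4 := congrArg QuaternionAlgebra.imK hm
  simp only [Quaternion.re_add, Quaternion.imI_add, Quaternion.imJ_add, Quaternion.imK_add,
    Quaternion.re_mul, Quaternion.imI_mul, Quaternion.imJ_mul, Quaternion.imK_mul,
    Quaternion.re_zero, Quaternion.imI_zero, Quaternion.imJ_zero, Quaternion.imK_zero] at hm1 hm2 hm3 hm4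
  simp only [e1, e2] at hm1 hm2 hm3 hm4
  apply QuaternionAlgebra.ext <;>
    simp only [Quaternion.re_sub, Quaternion.imI_sub, Quaternion.imJ_sub, Quaternion.imK_sub,
      Quaternion.re_mul, Quaternion.imI_mul, Quaternion.imJ_mul, Quaternion.imK_mul,
      Quaternion.re_zero, Quaternion.imI_zero, Quaternion.imJ_zero, Quaternion.imK_zero] <;>
      simp only [e1, e2] <;>
    nlinarith [hm1, hm2, hm3, hm4, hbre, hcre, hare, hbK, hcK, haK]

end Toro
end
end

section
/- Let γ(t) = (0, cos t, sin t), t ∈ [0, 2π]. Then: (i) for every m ∈ ℤ, ∫₀^{2π} ω_{W_m^+}(γ(t))(γ′(t)) dt = 0, and for every m ∈ ℤ with m ≠ −1, ∫₀^{2π} ω_{W_m^−}(γ(t))(γ′(t)) dt = 0; (ii) ∫₀^{2π} ω_{W_{−1}^−}(γ(t))(γ′(t)) dt ≠ 0; (iii) consequently, for any η₀ > 0 there exists no differentiable real-valued function h on Ω_{η₀} with ∂h = W_{−1}^− on Ω_{η₀}; (iv) nevertheless, on {x ∈ ℝ³ : x₁ > 0} one has W_{−1}^− = −∂(arctan(x₂/x₁)).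 Here, for a real-valued function h, ∂h = ∂₀h − ∂₁h e₁ − ∂₂h e₂. -/
open MeasureTheory Filter Quaternion

noncomputable section

namespace Toro

/-! ### Auxiliary lemmas for stmt_4 -/

lemma circ_hasDerivAt (t : ℝ) : HasDerivAt circ ![0, -Real.sin t, Real.cos t] t := by
  rw [hasDerivAt_pi]
  intro i
  fin_cases i
  · simpa [circ] using hasDerivAt_const t (0:ℝ)
  · simpa [circ] using Real.hasDerivAt_cos t
  · simpa [circ] using Real.hasDerivAt_sin t

lemma deriv_circ (t : ℝ) : deriv circ t = ![0, -Real.sin t, Real.cos t] :=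
  (circ_hasDerivAt t).deriv

lemma cis_eq (t : ℝ) : (⟨Real.cos t, Real.sin t⟩ : ℂ) = Complex.exp (t * Complex.I) := by
  apply Complex.ext <;> simp

lemma zpow_circ (m : ℤ) (t : ℝ) :
    ((⟨Real.cos t, Real.sin t⟩ : ℂ)) ^ m = ⟨Real.cos (m*t), Real.sin (m*t)⟩ := by
  rw [cis_eq, ← Complex.exp_int_mul, cis_eq]
  push_cast
  ring_nf

lemma int_sin (k : ℤ) : (∫ t in (0:ℝ)..(2*Real.pi), Real.sin (k*t)) = 0 := by
  rcases eq_or_ne k 0 with h | h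
  · simp [h]
  · rw [intervalIntegral.integral_comp_mul_left _ (by exact_mod_cast h : (k:ℝ) ≠ 0)]
    simp [Real.cos_int_mul_two_pi]

lemma int_cos (k : ℤ) (h : k ≠ 0) : (∫ t in (0:ℝ)..(2*Real.pi), Real.cos (k*t)) = 0 := by
  rw [intervalIntegral.integral_comp_mul_left _ (by exact_mod_cast h : (k:ℝ) ≠ 0)]
  have hs : Real.sin ((k:ℝ) * (2*Real.pi)) = 0 := by
    have := Real.sin_int_mul_pi (2*k)
    push_cast at this
    rw [show (k:ℝ) * (2*Real.pi) = 2*k*Real.pi by ring]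
    exact this
  simp [hs]

lemma circ_one (t : ℝ) : circ t 1 = Real.cos t := by simp [circ]
lemma circ_two (t : ℝ) : circ t 2 = Real.sin t := by simp [circ]
lemma circ_zero (t : ℝ) : circ t 0 = 0 := by simp [circ]

lemma Jp_circ (m : ℤ) (t : ℝ) : Jp m (circ t) = Real.cos (m*t) := by
  simp only [Jp, circ_one, circ_two, zpow_circ]

lemma Jm_circ (m : ℤ) (t : ℝ) : Jm m (circ t) = Real.sin (m*t) := by
  simp only [Jm, circ_one, circ_two, zpow_circ]

lemma omega_Wp (m : ℤ) (t : ℝ) :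
    omegaF (Wp m) (circ t) (deriv circ t) = Real.sin (((m+1 : ℤ)) * t) := by
  show (Wp m (circ t)).re * deriv circ t 0 - (Wp m (circ t)).imI * deriv circ t 1 -
      (Wp m (circ t)).imJ * deriv circ t 2 = _
  have h0 : (Wp m (circ t)).re = 0 := rfl
  have h1 : (Wp m (circ t)).imI = Jp m (circ t) := rfl
  have h2 : (Wp m (circ t)).imJ = -(Jm m (circ t)) := rfl
  rw [h0, h1, h2, deriv_circ, Jp_circ, Jm_circ]
  have e0 : (![0, -Real.sin t, Real.cos t] : ℝ³) 0 = 0 := rfl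
  have e1 : (![0, -Real.sin t, Real.cos t] : ℝ³) 1 = -Real.sin t := rfl
  have e2 : (![0, -Real.sin t, Real.cos t] : ℝ³) 2 = Real.cos t := rfl
  rw [e0, e1, e2]
  push_cast
  rw [show ((m:ℝ)+1)*t = m*t + t by ring, Real.sin_add]
  ring

lemma omega_Wn (m : ℤ) (t : ℝ) :
    omegaF (Wn m) (circ t) (deriv circ t) = -Real.cos (((m+1 : ℤ)) * t) := by
  show (Wn m (circ t)).re * deriv circ t 0 - (Wn m (circ t)).imI * deriv circ t 1 -
      (Wn m (circ t)).imJ * deriv circ t 2 = _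
  have h0 : (Wn m (circ t)).re = 0 := rfl
  have h1 : (Wn m (circ t)).imI = Jm m (circ t) := rfl
  have h2 : (Wn m (circ t)).imJ = Jp m (circ t) := rfl
  rw [h0, h1, h2, deriv_circ, Jp_circ, Jm_circ]
  have e0 : (![0, -Real.sin t, Real.cos t] : ℝ³) 0 = 0 := rfl
  have e1 : (![0, -Real.sin t, Real.cos t] : ℝ³) 1 = -Real.sin t := rfl
  have e2 : (![0, -Real.sin t, Real.cos t] : ℝ³) 2 = Real.cos t := rfl
  rw [e0, e1, e2]
  push_cast
  rw [show ((m:ℝ)+1)*t = m*t + t by ring, Real.cos_add]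
  ring

lemma circ_mem_torusDomain (η₀ : ℝ) (t : ℝ) : circ t ∈ torusDomain η₀ := by
  right
  refine ⟨circ_zero t, ?_⟩
  rw [circ_one, circ_two]
  rw [add_comm]
  exact Real.sin_sq_add_cos_sq t

lemma vec_decomp_s4 (t : ℝ) :
    (![0, -Real.sin t, Real.cos t] : ℝ³)
      = (-Real.sin t) • (Pi.single 1 1 : ℝ³) + (Real.cos t) • (Pi.single 2 1 : ℝ³) := by
  funext i
  fin_cases i <;> simp [Pi.single_apply]

/-- cohomology integrals of the basic monogenic constants along the
unit circle γ(t) = (0, cos t, sin t); W_{−1}^− is not of the form ∂h on any Ω_{η₀},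
yet W_{−1}^− = −∂ arctan(x₂/x₁) on {x₁ > 0}. -/
theorem stmt_4 :
    (∀ m : ℤ,
      (∫ t in (0 : ℝ)..(2 * Real.pi), omegaF (Wp m) (circ t) (deriv circ t)) = 0) ∧
    (∀ m : ℤ, m ≠ -1 →
      (∫ t in (0 : ℝ)..(2 * Real.pi), omegaF (Wn m) (circ t) (deriv circ t)) = 0) ∧
    (∫ t in (0 : ℝ)..(2 * Real.pi), omegaF (Wn (-1)) (circ t) (deriv circ t)) ≠ 0 ∧
    (∀ η₀ : ℝ, 0 < η₀ → ¬∃ h : ℝ³ → ℝ,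
      (∀ x ∈ torusDomain η₀, DifferentiableAt ℝ h x) ∧
      (∀ x ∈ torusDomain η₀, gradQ h x = Wn (-1) x)) ∧
    (∀ x : ℝ³, 0 < x 1 →
      Wn (-1) x = -gradQ (fun y => Real.arctan (y 2 / y 1)) x) := by
  refine ⟨?_, ?_, ?_, ?_, ?_⟩
  · intro m
    rw [intervalIntegral.integral_congr (g := fun t => Real.sin ((m+1 : ℤ) * t))
      (fun t _ => omega_Wp m t)]
    exact int_sin (m+1)
  · intro m hm
    rw [intervalIntegral.integral_congr (g := fun t => -Real.cos ((m+1 : ℤ) * t))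
      (fun t _ => omega_Wn m t)]
    rw [intervalIntegral.integral_neg, int_cos (m+1) (by omega), neg_zero]
  · rw [intervalIntegral.integral_congr (g := fun t => -Real.cos (((-1:ℤ)+1 : ℤ) * t))
      (fun t _ => omega_Wn (-1) t)]
    have : ∀ t : ℝ, -Real.cos (((-1:ℤ)+1 : ℤ) * t) = -1 := by
      intro t; norm_num
    rw [intervalIntegral.integral_congr (g := fun _ => (-1:ℝ)) (fun t _ => this t)]
    simp only [intervalIntegral.integral_const, smul_eq_mul, sub_zero]
    have := Real.pi_pos
    intro hcon
    nlinarith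
  · intro η₀ _ ⟨h, hdiff, hgrad⟩
    have key : ∀ t : ℝ, HasDerivAt (fun s => h (circ s)) (-1) t := by
      intro t
      have hd := (hdiff _ (circ_mem_torusDomain η₀ t)).hasFDerivAt
      have H := hd.comp_hasDerivAt t (circ_hasDerivAt t)
      have hg := hgrad _ (circ_mem_torusDomain η₀ t)
      have hg1 : -(pdf 1 h (circ t)) = Jm (-1) (circ t) := congrArg QuaternionAlgebra.imI hg
      have hg2 : -(pdf 2 h (circ t)) = Jp (-1) (circ t) := congrArg QuaternionAlgebra.imJ hg
      rw [Jm_circ, show ((-1:ℤ):ℝ) * t = -t by push_cast; ring, Real.sin_neg] at hg1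
      rw [Jp_circ, show ((-1:ℤ):ℝ) * t = -t by push_cast; ring, Real.cos_neg] at hg2
      have hval : fderiv ℝ h (circ t) ![0, -Real.sin t, Real.cos t] = -1 := by
        rw [vec_decomp_s4, map_add, _root_.map_smul, _root_.map_smul]
        have p1 : fderiv ℝ h (circ t) (Pi.single 1 1) = pdf 1 h (circ t) := rfl
        have p2 : fderiv ℝ h (circ t) (Pi.single 2 1) = pdf 2 h (circ t) := rfl
        rw [p1, p2]
        have e1 : pdf 1 h (circ t) = Real.sin t := by linarith [hg1]
        have e2 : pdf 2 h (circ t) = -Real.cos t := by linarith [hg2]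
        rw [e1, e2, smul_eq_mul, smul_eq_mul]
        nlinarith [Real.sin_sq_add_cos_sq t]
      rw [hval] at H
      exact H
    have key2 : ∀ t : ℝ, HasDerivAt (fun s => h (circ s) + s) 0 t := by
      intro t
      have h2 := (key t).add (hasDerivAt_id t)
      rw [show (-1:ℝ) + 1 = 0 by norm_num] at h2
      exact h2
    have hconst := is_const_of_deriv_eq_zero (f := fun s => h (circ s) + s)
      (fun t => (key2 t).differentiableAt) (fun t => (key2 t).deriv) (2*Real.pi) 0
    have hcirc : circ (2*Real.pi) = circ 0 := by
      funext i
      fin_cases i <;> simp [circ]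
    rw [hcirc] at hconst
    have := Real.pi_pos
    simp only [add_zero] at hconst
    linarith
  · intro x hx
    set a := x 1 with ha
    set b := x 2 with hb
    have ha0 : a ≠ 0 := ne_of_gt hx
    have hr : 0 < a^2 + b^2 := by positivity
    -- fderiv of y ↦ arctan (y 2 / y 1)
    have hproj1 : HasFDerivAt (fun y : ℝ³ => y 1)
        (ContinuousLinearMap.proj 1 : ℝ³ →L[ℝ] ℝ) x :=
      (ContinuousLinearMap.proj 1 : ℝ³ →L[ℝ] ℝ).hasFDerivAt
    have hproj2 : HasFDerivAt (fun y : ℝ³ => y 2)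
        (ContinuousLinearMap.proj 2 : ℝ³ →L[ℝ] ℝ) x :=
      (ContinuousLinearMap.proj 2 : ℝ³ →L[ℝ] ℝ).hasFDerivAt
    have hinv : HasFDerivAt (fun y : ℝ³ => (y 1)⁻¹)
        ((-(a^2)⁻¹) • (ContinuousLinearMap.proj 1 : ℝ³ →L[ℝ] ℝ)) x := by
      have h1 := (hasDerivAt_inv ha0).comp_hasFDerivAt x hproj1
      exact h1
    have hq : HasFDerivAt (fun y : ℝ³ => y 2 / y 1)
        ((b • ((-(a^2)⁻¹) • (ContinuousLinearMap.proj 1 : ℝ³ →L[ℝ] ℝ))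
          + a⁻¹ • (ContinuousLinearMap.proj 2 : ℝ³ →L[ℝ] ℝ))) x := by
      have := hproj2.mul hinv
      simp only [div_eq_mul_inv]
      exact this
    have harc : HasFDerivAt (fun y : ℝ³ => Real.arctan (y 2 / y 1))
        ((1 / (1 + (b/a)^2)) •
          (b • ((-(a^2)⁻¹) • (ContinuousLinearMap.proj 1 : ℝ³ →L[ℝ] ℝ))
          + a⁻¹ • (ContinuousLinearMap.proj 2 : ℝ³ →L[ℝ] ℝ))) x :=
      by have := (Real.hasDerivAt_arctan (b/a)).comp_hasFDerivAt x hq; exact this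
    have hf := harc.fderiv
    have pdfval : ∀ i : Fin 3, pdf i (fun y => Real.arctan (y 2 / y 1)) x
        = (1 / (1 + (b/a)^2)) * (b * ((-(a^2)⁻¹) * (Pi.single i 1 : ℝ³) 1)
            + a⁻¹ * (Pi.single i 1 : ℝ³) 2) := by
      intro i
      show fderiv ℝ (fun y => Real.arctan (y 2 / y 1)) x (Pi.single i 1) = _
      rw [hf]
      simp only [ContinuousLinearMap.smul_apply, ContinuousLinearMap.add_apply,
        ContinuousLinearMap.proj_apply, smul_eq_mul]
    have s11 : (Pi.single (1:Fin 3) (1:ℝ) : ℝ³) 1 = 1 := by simp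
    have s12 : (Pi.single (1:Fin 3) (1:ℝ) : ℝ³) 2 = 0 := by
      simp [Pi.single_apply]
    have s21 : (Pi.single (2:Fin 3) (1:ℝ) : ℝ³) 1 = 0 := by
      simp [Pi.single_apply]
    have s22 : (Pi.single (2:Fin 3) (1:ℝ) : ℝ³) 2 = 1 := by simp
    have s01 : (Pi.single (0:Fin 3) (1:ℝ) : ℝ³) 1 = 0 := by
      simp [Pi.single_apply]
    have s02 : (Pi.single (0:Fin 3) (1:ℝ) : ℝ³) 2 = 0 := by
      simp [Pi.single_apply]
    have p0 : pdf 0 (fun y : ℝ³ => Real.arctan (y 2 / y 1)) x = 0 := by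
      rw [pdfval 0, s01, s02]; ring
    have p1 : pdf 1 (fun y : ℝ³ => Real.arctan (y 2 / y 1)) x = -b / (a^2 + b^2) := by
      rw [pdfval 1, s11, s12]
      field_simp
      ring
    have p2 : pdf 2 (fun y : ℝ³ => Real.arctan (y 2 / y 1)) x = a / (a^2 + b^2) := by
      rw [pdfval 2, s21, s22]
      field_simp
      ring
    have hz : ((⟨a, b⟩ : ℂ)) ≠ 0 := by
      intro hc
      rw [Complex.ext_iff] at hc
      exact ha0 hc.1
    have hJm : Jm (-1) x = -b / (a^2 + b^2) := by
      show ((⟨a, b⟩ : ℂ) ^ (-1:ℤ)).im = _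
      rw [zpow_neg_one, Complex.inv_im]
      simp [Complex.normSq_mk]
      rw [neg_div]
      ring_nf
    have hJp : Jp (-1) x = a / (a^2 + b^2) := by
      show ((⟨a, b⟩ : ℂ) ^ (-1:ℤ)).re = _
      rw [zpow_neg_one, Complex.inv_re]
      simp [Complex.normSq_mk]
      ring_nf
    show (⟨0, Jm (-1) x, Jp (-1) x, 0⟩ : ℍ[ℝ]) = -⟨_, _, _, _⟩
    rw [QuaternionAlgebra.neg_mk]
    rw [hJm, hJp, p0, p1, p2]
    norm_num

end Toro
end
end

section
/- Let η₀ > 0 and let f, g : Ω_{η₀} → 𝒜 be continuously differentiable monogenic functions such that f + g·e₃ = 0 identically on Ω_{η₀} (right multiplication by e₃). Then f and g are monogenic constants, i.e. ∂f = 0 and ∂g = 0 on Ω_{η₀}. -/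
open MeasureTheory Filter Quaternion

noncomputable section

namespace Toro

/-- Auxiliary: derivative of a linear component that vanishes on a neighborhood. -/
lemma aux_comp_pdf_zero (L : ℍ[ℝ] →ₗ[ℝ] ℝ) (s : Set ℝ³) (x : ℝ³) (hs : s ∈ nhds x)
    (f : ℝ³ → ℍ[ℝ]) (hf : DifferentiableAt ℝ f x)
    (h0 : ∀ y ∈ s, L (f y) = 0) (i : Fin 3) : L (pdf i f x) = 0 := by
  set Lc : ℍ[ℝ] →L[ℝ] ℝ := L.toContinuousLinearMap
  have hcomp : HasFDerivAt (fun y => L (f y)) (Lc.comp (fderiv ℝ f x)) x :=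
    (Lc.hasFDerivAt.comp x hf.hasFDerivAt)
  have heq : (fun y => L (f y)) =ᶠ[nhds x] fun _ => (0:ℝ) :=
    Filter.eventually_of_mem hs h0
  have h1 : fderiv ℝ (fun y => L (f y)) x = fderiv ℝ (fun _ => (0:ℝ)) x :=
    heq.fderiv_eq
  have h2 : Lc.comp (fderiv ℝ f x) = 0 := by
    rw [← hcomp.fderiv, h1]
    simp
  have := congrFun (congrArg (fun (m : ℝ³ →L[ℝ] ℝ) => (m : ℝ³ → ℝ)) h2) (Pi.single i 1)
  simpa [pdf, Lc] using this

/-- Auxiliary: an 𝒜-valued monogenic function with vanishing scalar part near `x`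
is a monogenic constant at `x`. -/
lemma aux_keyC (s : Set ℝ³) (x : ℝ³) (hs : s ∈ nhds x) (f : ℝ³ → ℍ[ℝ])
    (hf : DifferentiableAt ℝ f x)
    (hre : ∀ y ∈ s, (f y).re = 0) (hk : ∀ y ∈ s, (f y).imK = 0)
    (hbar : CRbar f x = 0) : CRconj f x = 0 := by
  have hre' : ∀ i, (pdf i f x).re = 0 := fun i =>
    aux_comp_pdf_zero (QuaternionAlgebra.reₗ _ _ _) s x hs f hf hre i
  have hk' : ∀ i, (pdf i f x).imK = 0 := fun i =>
    aux_comp_pdf_zero (QuaternionAlgebra.imKₗ _ _ _) s x hs f hf hk i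
  have hP : pdf 0 f x = 0 := by
    have h1 := congrArg QuaternionAlgebra.imI hbar
    have h2 := congrArg QuaternionAlgebra.imJ hbar
    simp [CRbar, Quaternion.imI_mul, Quaternion.imJ_mul] at h1 h2
    simp [CRbar, e1, e2, hre' 1, hre' 2, hk' 1, hk' 2] at h1 h2
    ext <;> simp [hre' 0, hk' 0, h1, h2]
  have h2 : e1 * pdf 1 f x + e2 * pdf 2 f x = 0 := by
    have := hbar
    rw [CRbar, hP, zero_add] at this
    exact this
  rw [CRconj, hP, zero_sub, sub_eq_add_neg, ← neg_add, h2, neg_zero]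

lemma aux_forward (η₀ η θ φ : ℝ) (hη₀ : 0 < η₀) (hη : η₀ < η) :
    Real.exp (2*η₀) * d2sq (torusCoords η θ φ) < d1sq (torusCoords η θ φ) := by
  set x := torusCoords η θ φ with hx
  have hcosh : (1:ℝ) < Real.cosh η :=
    Real.one_lt_cosh.mpr (by linarith : η ≠ 0)
  have hc : 0 < Real.cosh η - Real.cos θ := by
    have := Real.cos_le_one θ; linarith
  have hsinh : 0 < Real.sinh η := Real.sinh_pos_iff.mpr (by linarith)
  have hx0 : x 0 = Real.sin θ / (Real.cosh η - Real.cos θ) := by rw [hx]; rfl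
  have hx1 : x 1 = Real.sinh η * Real.cos φ / (Real.cosh η - Real.cos θ) := by rw [hx]; rfl
  have hx2 : x 2 = Real.sinh η * Real.sin φ / (Real.cosh η - Real.cos θ) := by rw [hx]; rfl
  have hrho : rhoOf x = Real.sinh η / (Real.cosh η - Real.cos θ) := by
    rw [rhoOf, hx1, hx2]
    rw [show (Real.sinh η * Real.cos φ / (Real.cosh η - Real.cos θ))^2
        + (Real.sinh η * Real.sin φ / (Real.cosh η - Real.cos θ))^2
        = (Real.sinh η / (Real.cosh η - Real.cos θ))^2 by
      field_simp
      nlinarith [Real.sin_sq_add_cos_sq φ]]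
    exact Real.sqrt_sq (by positivity)
  have hE : Real.exp η = Real.cosh η + Real.sinh η := by
    rw [Real.cosh_eq, Real.sinh_eq]; ring
  have hE' : Real.exp (-η) = Real.cosh η - Real.sinh η := by
    rw [Real.cosh_eq, Real.sinh_eq]; ring
  have h1 := Real.sin_sq_add_cos_sq θ
  have h2 := Real.cosh_sq_sub_sinh_sq η
  have hc' := ne_of_gt hc
  have key1 : (Real.sinh η + (Real.cosh η - Real.cos θ))^2 + Real.sin θ^2
      = 2*Real.exp η*(Real.cosh η - Real.cos θ) := by
    linear_combination h1 - h2 - 2*(Real.cosh η - Real.cos θ)*hE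
  have key2 : (Real.sinh η - (Real.cosh η - Real.cos θ))^2 + Real.sin θ^2
      = 2*Real.exp (-η)*(Real.cosh η - Real.cos θ) := by
    linear_combination h1 - h2 - 2*(Real.cosh η - Real.cos θ)*hE'
  have hd1 : d1sq x = 2 * Real.exp η / (Real.cosh η - Real.cos θ) := by
    rw [d1sq, hrho, hx0, div_add' _ _ _ hc', div_pow, div_pow, ← add_div,
      div_eq_div_iff (by positivity) hc']
    linear_combination (Real.cosh η - Real.cos θ) * key1
  have hd2 : d2sq x = 2 * Real.exp (-η) / (Real.cosh η - Real.cos θ) := by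
    rw [d2sq, hrho, hx0, div_sub' hc', div_pow, div_pow, ← add_div,
      div_eq_div_iff (by positivity) hc']
    linear_combination (Real.cosh η - Real.cos θ) * key2
  rw [hd1, hd2]
  have h : Real.exp (2*η₀) * (2 * Real.exp (-η)) < 2 * Real.exp η := by
    have e1 := Real.exp_add (2*η₀) (-η)
    have e2 : Real.exp (2*η₀ + -η) < Real.exp η := Real.exp_lt_exp.mpr (by linarith)
    nlinarith
  rw [← mul_div_assoc]
  gcongr

lemma aux_backward (η₀ : ℝ) (hη₀ : 0 < η₀) (x : ℝ³)
    (h : Real.exp (2*η₀) * d2sq x < d1sq x) : x ∈ torusDomain η₀ := by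
  set ρ := rhoOf x with hρdef
  have hρ0 : 0 ≤ ρ := Real.sqrt_nonneg _
  have hsq : ρ^2 = (x 1)^2 + (x 2)^2 := Real.sq_sqrt (by positivity)
  by_cases hd2 : d2sq x = 0
  · -- core circle
    right
    have h1 : (ρ - 1)^2 = 0 ∧ (x 0)^2 = 0 := by
      constructor <;> nlinarith [sq_nonneg (ρ-1), sq_nonneg (x 0), hd2, (by rw [d2sq] : d2sq x = (ρ-1)^2 + (x 0)^2)]
    have hρ1 : ρ = 1 := by nlinarith [h1.1]
    have hx0 : x 0 = 0 := by nlinarith [h1.2]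
    exact ⟨hx0, by rw [← hsq, hρ1]; norm_num⟩
  · left
    have hd2pos : 0 < d2sq x := lt_of_le_of_ne (by rw [d2sq]; positivity) (Ne.symm hd2)
    have hd2' : d2sq x = (ρ-1)^2 + (x 0)^2 := rfl
    have hd1' : d1sq x = (ρ+1)^2 + (x 0)^2 := rfl
    have hexp1 : (1:ℝ) < Real.exp (2*η₀) := by
      rw [← Real.exp_zero]; exact Real.exp_lt_exp.mpr (by linarith)
    have hρpos : 0 < ρ := by nlinarith
    set w : ℂ := (ρ : ℂ) - (x 0 : ℂ) * Complex.I with hwdef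
    have hwre : w.re = ρ := by simp [hwdef]
    have hwim : w.im = -(x 0) := by simp [hwdef]
    have hnsq2 : Complex.normSq (w - 1) = d2sq x := by
      rw [Complex.normSq_apply, hd2']
      simp [Complex.sub_re, Complex.sub_im, hwre, hwim]
      ring
    have hnsq1 : Complex.normSq (w + 1) = d1sq x := by
      rw [Complex.normSq_apply, hd1']
      simp [Complex.add_re, Complex.add_im, hwre, hwim]
      ring
    have hwne : w - 1 ≠ 0 := by
      intro hcon
      rw [hcon, map_zero] at hnsq2
      exact hd2 hnsq2.symm
    set u : ℂ := (w + 1)/(w - 1) with hudef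
    have habsu : ‖u‖^2 = d1sq x / d2sq x := by
      rw [hudef, norm_div, div_pow, Complex.sq_norm, Complex.sq_norm, hnsq1, hnsq2]
    have hgt : Real.exp η₀ < ‖u‖ := by
      have h2 : Real.exp (2*η₀) < ‖u‖^2 := by
        rw [habsu, lt_div_iff₀ hd2pos]; linarith
      have h3 : Real.exp (2*η₀) = (Real.exp η₀)^2 := by
        rw [sq, ← Real.exp_add]; ring_nf
      nlinarith [norm_nonneg u, Real.exp_pos η₀]
    have habspos : 0 < ‖u‖ := lt_trans (Real.exp_pos η₀) hgt
    have hu0 : u ≠ 0 := by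
      intro hcon; rw [hcon, norm_zero] at habspos; exact lt_irrefl 0 habspos
    set η := Real.log ‖u‖ with hηdef
    set θ := Complex.arg u with hθdef
    set φ := Complex.arg ((x 1 : ℂ) + (x 2 : ℂ) * Complex.I) with hφdef
    set E := Real.exp η with hEdef
    have hE : E = ‖u‖ := Real.exp_log habspos
    have hηgt : η₀ < η := (Real.lt_log_iff_exp_lt habspos).mpr hgt
    have hure : u.re = E * Real.cos θ := by
      rw [hθdef, Complex.cos_arg hu0, hE]
      field_simp
    have huim : u.im = E * Real.sin θ := by
      rw [hθdef, Complex.sin_arg, hE]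
      field_simp
    have hwu : w * (u - 1) = u + 1 := by
      have h1 : u * (w - 1) = w + 1 := by
        rw [hudef]; field_simp
      linear_combination h1
    clear hudef hθdef hwdef
    clear_value E η θ u w
    have HRE : ρ * (E*Real.cos θ - 1) + x 0 * (E*Real.sin θ) = E*Real.cos θ + 1 := by
      have h5 : (w * (u - 1)).re = (u + 1).re := congrArg Complex.re hwu
      simp only [Complex.mul_re, Complex.sub_re, Complex.sub_im, Complex.add_re, Complex.one_re,
        Complex.one_im, hwre, hwim, hure, huim] at h5
      linarith
    have HIM : ρ * (E*Real.sin θ) - x 0 * (E*Real.cos θ - 1) = E*Real.sin θ := by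
      have h5 : (w * (u - 1)).im = (u + 1).im := congrArg Complex.im hwu
      simp only [Complex.mul_im, Complex.sub_re, Complex.sub_im, Complex.add_im, Complex.one_re,
        Complex.one_im, hwre, hwim, hure, huim] at h5
      linarith
    have hEpos : 0 < E := by rw [hEdef]; exact Real.exp_pos η
    have hEinv : E * Real.exp (-η) = 1 := by
      rw [hEdef, ← Real.exp_add]; simp
    have hch2 : 2*E*Real.cosh η = E^2 + 1 := by
      linear_combination 2*E*(Real.cosh_eq η) - E*hEdef + hEinv
    have hsh2 : 2*E*Real.sinh η = E^2 - 1 := by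
      linear_combination 2*E*(Real.sinh_eq η) - E*hEdef - hEinv
    have hpy := Real.sin_sq_add_cos_sq θ
    have hcosh1 : (1:ℝ) < Real.cosh η := Real.one_lt_cosh.mpr (by linarith : η ≠ 0)
    have hcgt : 0 < Real.cosh η - Real.cos θ := by
      have := Real.cos_le_one θ; linarith
    have hcne := ne_of_gt hcgt
    have g1 : ρ * (Real.cosh η - Real.cos θ) = Real.sinh η := by
      apply mul_left_cancel₀ (by positivity : (2*E) ≠ 0)
      linear_combination ρ*hch2 - hsh2 + (E*Real.cos θ - 1)*HRE + (E*Real.sin θ)*HIM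
        - ρ*E^2*hpy + E^2*hpy
    have g2 : x 0 * (Real.cosh η - Real.cos θ) = Real.sin θ := by
      apply mul_left_cancel₀ (by positivity : (2*E) ≠ 0)
      linear_combination (x 0)*hch2 + (E*Real.sin θ)*HRE - (E*Real.cos θ - 1)*HIM
        - (x 0)*E^2*hpy
    set z : ℂ := (x 1 : ℂ) + (x 2 : ℂ) * Complex.I with hzdef
    have hzre : z.re = x 1 := by simp [hzdef]
    have hzim : z.im = x 2 := by simp [hzdef]
    have habsz : ‖z‖ = ρ := by
      rw [Complex.norm_def, Complex.normSq_apply, hzre, hzim, hρdef, rhoOf]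
      ring_nf
    have hz0 : z ≠ 0 := by
      intro hcon
      rw [hcon, norm_zero] at habsz
      exact absurd habsz.symm (ne_of_gt hρpos)
    have hx1 : x 1 = ρ * Real.cos φ := by
      rw [hφdef, Complex.cos_arg hz0, habsz, hzre]
      field_simp
    have hx2 : x 2 = ρ * Real.sin φ := by
      rw [hφdef, Complex.sin_arg, habsz, hzim]
      field_simp
    refine ⟨η, θ, φ, hηgt, ?_⟩
    have hρeq : ρ = Real.sinh η / (Real.cosh η - Real.cos θ) := by
      rw [eq_div_iff hcne]; exact g1
    have hx0eq : x 0 = Real.sin θ / (Real.cosh η - Real.cos θ) := by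
      rw [eq_div_iff hcne]; exact g2
    funext i
    fin_cases i
    · simpa [torusCoords] using hx0eq
    · have hgoal : x 1 = Real.sinh η * Real.cos φ / (Real.cosh η - Real.cos θ) := by
        rw [hx1, hρeq]; ring
      simpa [torusCoords] using hgoal
    · have hgoal : x 2 = Real.sinh η * Real.sin φ / (Real.cosh η - Real.cos θ) := by
        rw [hx2, hρeq]; ring
      simpa [torusCoords] using hgoal

lemma aux_torusDomain_eq (η₀ : ℝ) (hη₀ : 0 < η₀) :
    torusDomain η₀ = {x | Real.exp (2*η₀) * d2sq x < d1sq x} := by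
  apply Set.Subset.antisymm
  · rintro x (⟨η, θ, φ, hη, rfl⟩ | ⟨hx0, hx12⟩)
    · exact aux_forward η₀ η θ φ hη₀ hη
    · show Real.exp (2*η₀) * d2sq _ < d1sq _
      have hρ : rhoOf x = 1 := by rw [rhoOf, hx12]; exact Real.sqrt_one
      have h2 : d2sq x = 0 := by rw [d2sq, hρ, hx0]; ring
      have h1 : d1sq x = 4 := by rw [d1sq, hρ, hx0]; norm_num
      rw [h1, h2, mul_zero]; norm_num
  · intro x hx
    exact aux_backward η₀ hη₀ x hx

lemma aux_isOpen_torusDomain (η₀ : ℝ) (hη₀ : 0 < η₀) : IsOpen (torusDomain η₀) := by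
  rw [aux_torusDomain_eq η₀ hη₀]
  have hρc : Continuous rhoOf := by
    unfold rhoOf
    exact Real.continuous_sqrt.comp (by fun_prop)
  have h1 : Continuous d1sq := by unfold d1sq; fun_prop
  have h2 : Continuous d2sq := by unfold d2sq; fun_prop
  exact isOpen_lt (by fun_prop) h1

lemma aux_mul_e3_re (a : ℍ[ℝ]) : (a * e3).re = -(a.imK) := by rw [Quaternion.re_mul]; simp [e3]
lemma aux_mul_e3_imK (a : ℍ[ℝ]) : (a * e3).imK = a.re := by rw [Quaternion.imK_mul]; simp [e3]

/-- if f, g are 𝒜-valued monogenic functions on Ω_{η₀} with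
f + g·e₃ = 0, then f and g are monogenic constants. -/
theorem stmt_15 (η₀ : ℝ) (hη : 0 < η₀) (f g : ℝ³ → ℍ[ℝ])
    (hfC : ∀ x ∈ torusDomain η₀, ContDiffAt ℝ 1 f x)
    (hgC : ∀ x ∈ torusDomain η₀, ContDiffAt ℝ 1 g x)
    (hfA : ∀ x ∈ torusDomain η₀, (f x).imK = 0)
    (hgA : ∀ x ∈ torusDomain η₀, (g x).imK = 0)
    (hfm : ∀ x ∈ torusDomain η₀, CRbar f x = 0)
    (hgm : ∀ x ∈ torusDomain η₀, CRbar g x = 0)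
    (hzero : ∀ x ∈ torusDomain η₀, f x + g x * e3 = 0) :
    (∀ x ∈ torusDomain η₀, CRconj f x = 0) ∧
    (∀ x ∈ torusDomain η₀, CRconj g x = 0) := by
  have hopen := aux_isOpen_torusDomain η₀ hη
  have hfre : ∀ y ∈ torusDomain η₀, (f y).re = 0 := by
    intro y hy
    have hz := congrArg QuaternionAlgebra.re (hzero y hy)
    simp [Quaternion.re_mul] at hz
    simpa [e3, Quaternion.re_mul, hgA y hy] using hz
  have hgre : ∀ y ∈ torusDomain η₀, (g y).re = 0 := by
    intro y hy
    have hz := congrArg QuaternionAlgebra.imK (hzero y hy)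
    simp [Quaternion.imK_mul] at hz
    simpa [e3, Quaternion.imK_mul, hfA y hy] using hz
  constructor
  · intro x hx
    exact aux_keyC (torusDomain η₀) x (hopen.mem_nhds hx) f
      ((hfC x hx).differentiableAt one_ne_zero) hfre hfA (hfm x hx)
  · intro x hx
    exact aux_keyC (torusDomain η₀) x (hopen.mem_nhds hx) g
      ((hgC x hx).differentiableAt one_ne_zero) hgre hgA (hgm x hx)


end Toro
end
end
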